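/- arXiv:1512.02443 — 7 statements merged into one kernel-verified Lean document; each statement's English description precedes it below -/
import Mathlib

section
/- Let G be a 2-connected simple graph and let C be a cycle in G of odd length. Then every edge e of G that does not lie on C is contained in a cycle of even length. -/
open SimpleGraph

/-- A graph is 2-connected if it has more than 2 vertices, is connected, and
remains connected after the deletion of any single vertex. -/
def TwoConnected {V : Type*} [Fintype V] (G : SimpleGraph V) : Prop :=
  2 < Fintype.card V ∧ G.Connected ∧ ∀ v : V, (G.induce {x | x ≠ v}).Connected

section Aux

variable {V : Type*} {G : SimpleGraph V}

lemma aux_parity2 {m n : ℕ} (h : Odd (m + n)) : (Even m ∧ Odd n) ∨ (Odd m ∧ Even n) := by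
  obtain ⟨j, hj⟩ := h
  rcases Nat.even_or_odd m with hm | hm
  · obtain ⟨k, hk⟩ := hm
    exact Or.inl ⟨⟨k, hk⟩, ⟨j - k, by omega⟩⟩
  · obtain ⟨k, hk⟩ := hm
    exact Or.inr ⟨⟨k, hk⟩, ⟨j - k, by omega⟩⟩

lemma aux_append_isPath {a b c : V} {p : G.Walk a b} {q : G.Walk b c}
    (hp : p.IsPath) (hq : q.IsPath) (hint : ∀ v ∈ p.support, v ∈ q.support → v = b) :
    (p.append q).IsPath := by
  rw [Walk.isPath_def, Walk.support_append]
  refine List.Nodup.append hp.support_nodup hq.support_nodup.tail ?_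
  intro v hv hv'
  have hvq : v ∈ q.support := List.mem_of_mem_tail hv'
  have hvb := hint v hv hvq
  subst hvb
  have hnd := hq.support_nodup
  rw [q.support_eq_cons] at hnd
  exact (List.nodup_cons.mp hnd).1 hv'

lemma aux_firsthit {a b : V} (p : G.Walk a b) {S : Set V} (hb : b ∈ S) :
    ∃ c : V, c ∈ S ∧ ∃ (q : G.Walk a c) (r : G.Walk c b),
      q.append r = p ∧ ∀ v ∈ q.support, v ∈ S → v = c := by
  induction p with
  | nil =>
    exact ⟨_, hb, Walk.nil, Walk.nil, rfl, fun v hv _ => by simpa using hv⟩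
  | @cons a a₂ b h p' ih =>
    by_cases ha : a ∈ S
    · exact ⟨a, ha, Walk.nil, Walk.cons h p', rfl, fun v hv _ => by simpa using hv⟩
    · obtain ⟨c, hc, q, r, hqr, hcond⟩ := ih hb
      refine ⟨c, hc, Walk.cons h q, r, by rw [Walk.cons_append, hqr], ?_⟩
      intro v hv hvS
      rw [Walk.support_cons, List.mem_cons] at hv
      rcases hv with rfl | hv
      · exact absurd hvS ha
      · exact hcond v hv hvS

lemma aux_avoid [DecidableEq V] {v a b : V} (h2 : (G.induce {x | x ≠ v}).Connected)
    (ha : a ≠ v) (hb : b ≠ v) :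
    ∃ p : G.Walk a b, p.IsPath ∧ v ∉ p.support := by
  obtain ⟨w0⟩ := h2.preconnected ⟨a, ha⟩ ⟨b, hb⟩
  let p0 : G.Walk a b := w0.map (SimpleGraph.Embedding.induce {x | x ≠ v}).toHom
  refine ⟨p0.bypass, p0.bypass_isPath, fun hv => ?_⟩
  have hmem := p0.support_bypass_subset hv
  simp only [p0, Walk.support_map] at hmem
  obtain ⟨u, -, hval⟩ := List.mem_map.mp (Eq.mp (congrArg (v ∈ ·) (Walk.support_map (SimpleGraph.Embedding.induce {x | x ≠ v}).toHom w0)) hmem)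
  exact u.2 hval

lemma aux_split [DecidableEq V] {x w : V} {D : G.Walk x x} (hD : D.IsCycle)
    (hw : w ∈ D.support) (hne : w ≠ x) :
    (D.takeUntil w hw).IsPath ∧ (D.dropUntil w hw).IsPath ∧
      (D.takeUntil w hw).length + (D.dropUntil w hw).length = D.length ∧
      ∀ v, v ∈ (D.takeUntil w hw).support → v ∈ (D.dropUntil w hw).support → v = x ∨ v = w := by
  have hspec := D.take_spec hw
  set t := D.takeUntil w hw with ht
  set d := D.dropUntil w hw with hd
  have hsupp : t.support ++ d.support.tail = D.support := by
    rw [← hspec, Walk.support_append]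
  have hNod : D.support.tail.Nodup := hD.support_nodup
  have htail : t.support.tail ++ d.support.tail = D.support.tail := by
    rw [t.support_eq_cons, List.cons_append] at hsupp
    rw [D.support_eq_cons] at hsupp
    simp only [List.cons.injEq] at hsupp
    exact hsupp.2
  have hnd := List.nodup_append'.mp (htail ▸ hNod)
  have hwt : w ∈ t.support.tail := by
    have hh := t.end_mem_support
    rw [t.support_eq_cons, List.mem_cons] at hh
    rcases hh with hh | hh
    · exact absurd hh hne
    · exact hh
  have hxd : x ∈ d.support.tail := by
    have hh := d.end_mem_support
    rw [d.support_eq_cons, List.mem_cons] at hh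
    rcases hh with hh | hh
    · exact absurd hh.symm hne
    · exact hh
  have htp : t.IsPath := by
    rw [Walk.isPath_def, t.support_eq_cons]
    exact List.nodup_cons.mpr ⟨fun hx => hnd.2.2 hx hxd, hnd.1⟩
  have hdp : d.IsPath := by
    rw [Walk.isPath_def, d.support_eq_cons]
    exact List.nodup_cons.mpr ⟨fun hx => hnd.2.2 hwt hx, hnd.2.1⟩
  refine ⟨htp, hdp, ?_, ?_⟩
  · have hl := congrArg Walk.length hspec
    rwa [Walk.length_append] at hl
  · intro v hv hv'
    rw [t.support_eq_cons, List.mem_cons] at hv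
    rcases hv with rfl | hv
    · exact Or.inl rfl
    · rw [d.support_eq_cons, List.mem_cons] at hv'
      rcases hv' with rfl | hv'
      · exact Or.inr rfl
      · exact (hnd.2.2 hv hv').elim

lemma aux_mem_support_rotate [DecidableEq V] {x u : V} (D : G.Walk x x) (hu : u ∈ D.support)
    {w : V} : w ∈ (D.rotate u hu).support ↔ w ∈ D.support := by
  rw [Walk.rotate, Walk.mem_support_append_iff]
  conv_rhs => rw [← D.take_spec hu]
  rw [Walk.mem_support_append_iff]
  exact or_comm

lemma aux_length_rotate [DecidableEq V] {x u : V} (D : G.Walk x x) (hu : u ∈ D.support) :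
    (D.rotate u hu).length = D.length := by
  rw [Walk.rotate, Walk.length_append]
  conv_rhs => rw [← D.take_spec hu, Walk.length_append]
  exact Nat.add_comm _ _

lemma aux_mem_edges_rotate [DecidableEq V] {x u : V} (D : G.Walk x x) (hu : u ∈ D.support)
    {f : Sym2 V} : f ∈ (D.rotate u hu).edges ↔ f ∈ D.edges :=
  (D.rotate_edges u hu).perm.mem_iff

lemma aux_edge_ends {a b : V} {W : G.Walk a b} (hW : W.IsPath) (hm : s(a, b) ∈ W.edges) :
    W.length = 1 := by
  cases W with
  | nil => simp at hm
  | @cons _ w₂ _ h W' =>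
    rw [Walk.edges_cons, List.mem_cons] at hm
    rcases hm with hm | hm
    · have hbw : b = w₂ := Sym2.congr_right.mp hm
      subst hbw
      cases W' with
      | nil => simp
      | cons h'' W'' =>
        rw [Walk.cons_isPath_iff, Walk.cons_isPath_iff] at hW
        exact absurd W''.end_mem_support (by simpa using hW.1.2)
    · rw [Walk.cons_isPath_iff] at hW
      exact absurd (W'.fst_mem_support_of_mem_edges hm) hW.2

lemma aux_first_edge {u v : V} (p : G.Walk u v) (hp : ¬ p.Nil) :
    s(u, p.getVert 1) ∈ p.edges := by
  cases p with
  | nil => simp at hp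
  | cons h q => simp [Walk.getVert_cons_succ]

lemma aux_compose [DecidableEq V] {a b : V} {C₀ : G.Walk a a} (hC : C₀.IsCycle)
    (hb : b ∈ C₀.support) (hba : b ≠ a) {W : G.Walk a b} (hW : W.IsPath)
    (hdisj : ∀ v ∈ W.support, v ∈ C₀.support → v = a ∨ v = b)
    (hsafe : s(a, b) ∈ W.edges → s(a, b) ∉ C₀.edges) :
    ∃ E₁ E₂ : G.Walk a a, E₁.IsCycle ∧ E₂.IsCycle ∧
      E₁.length + E₂.length = 2 * W.length + C₀.length ∧
      (∀ f ∈ W.edges, f ∈ E₁.edges) ∧ (∀ f ∈ W.edges, f ∈ E₂.edges) ∧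
      (∀ f ∈ E₁.edges, f ∈ W.edges ∨ f ∈ C₀.edges) ∧
      (∀ f ∈ E₂.edges, f ∈ W.edges ∨ f ∈ C₀.edges) ∧
      (∀ v ∈ W.support, v ∈ E₁.support) ∧ (∀ v ∈ W.support, v ∈ E₂.support) := by
  obtain ⟨htp, hdp, hlen, hjunc⟩ := aux_split hC hb hba
  set t := C₀.takeUntil b hb with htdef
  set d := C₀.dropUntil b hb with hddef
  cases W with
  | nil => exact absurd rfl hba
  | @cons _ w₂ _ h₀ W₀ =>
    rw [Walk.cons_isPath_iff] at hW
    obtain ⟨hW₀, haW₀⟩ := hW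
    have hw₂W : w₂ ∈ (Walk.cons h₀ W₀).support := by
      rw [Walk.support_cons, List.mem_cons]
      exact Or.inr W₀.start_mem_support
    -- the common "w₂ = b leads to first edge s(a,b)" fact
    have hfirst : w₂ = b → s(a, b) ∈ (Walk.cons h₀ W₀).edges := by
      intro hwb; subst hwb; simp
    -- E₁ := cons h₀ (W₀ ++ d)
    have hp₁ : (W₀.append d).IsPath := by
      refine aux_append_isPath hW₀ hdp ?_
      intro v hv hv'
      have hvC : v ∈ C₀.support := C₀.support_dropUntil_subset hb hv'
      have hvW : v ∈ (Walk.cons h₀ W₀).support := by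
        rw [Walk.support_cons, List.mem_cons]; exact Or.inr hv
      rcases hdisj v hvW hvC with rfl | rfl
      · exact absurd hv haW₀
      · rfl
    have hne₁ : s(a, w₂) ∉ (W₀.append d).edges := by
      rw [Walk.edges_append, List.mem_append]
      rintro (hmem | hmem)
      · exact haW₀ (W₀.fst_mem_support_of_mem_edges hmem)
      · have hw₂C : w₂ ∈ C₀.support :=
          C₀.support_dropUntil_subset hb (d.snd_mem_support_of_mem_edges hmem)
        rcases hdisj w₂ hw₂W hw₂C with hwa | hwb
        · exact h₀.ne' hwa
        · have hsab := hsafe (hfirst hwb)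
          rw [hwb] at hmem
          exact hsab (C₀.edges_dropUntil_subset hb hmem)
    have hE₁ : (Walk.cons h₀ (W₀.append d)).IsCycle := by
      rw [Walk.cons_isCycle_iff]
      exact ⟨hp₁, hne₁⟩
    -- E₂ := cons h₀ (W₀ ++ t.reverse)
    have hp₂ : (W₀.append t.reverse).IsPath := by
      refine aux_append_isPath hW₀ htp.reverse ?_
      intro v hv hv'
      have hvC : v ∈ C₀.support := by
        apply C₀.support_takeUntil_subset hb
        rwa [Walk.support_reverse, List.mem_reverse] at hv'
      have hvW : v ∈ (Walk.cons h₀ W₀).support := by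
        rw [Walk.support_cons, List.mem_cons]; exact Or.inr hv
      rcases hdisj v hvW hvC with rfl | rfl
      · exact absurd hv haW₀
      · rfl
    have hne₂ : s(a, w₂) ∉ (W₀.append t.reverse).edges := by
      rw [Walk.edges_append, List.mem_append]
      rintro (hmem | hmem)
      · exact haW₀ (W₀.fst_mem_support_of_mem_edges hmem)
      · rw [Walk.edges_reverse, List.mem_reverse] at hmem
        have hw₂C : w₂ ∈ C₀.support :=
          C₀.support_takeUntil_subset hb (t.snd_mem_support_of_mem_edges hmem)
        rcases hdisj w₂ hw₂W hw₂C with hwa | hwb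
        · exact h₀.ne' hwa
        · have hsab := hsafe (hfirst hwb)
          rw [hwb] at hmem
          exact hsab (C₀.edges_takeUntil_subset hb hmem)
    have hE₂ : (Walk.cons h₀ (W₀.append t.reverse)).IsCycle := by
      rw [Walk.cons_isCycle_iff]
      exact ⟨hp₂, hne₂⟩
    refine ⟨Walk.cons h₀ (W₀.append d), Walk.cons h₀ (W₀.append t.reverse),
      hE₁, hE₂, ?_, ?_, ?_, ?_, ?_, ?_, ?_⟩
    · simp only [Walk.length_cons, Walk.length_append, Walk.length_reverse]
      omega
    · intro f hf
      rw [Walk.edges_cons, List.mem_cons] at hf ⊢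
      rcases hf with rfl | hf
      · exact Or.inl rfl
      · exact Or.inr (by rw [Walk.edges_append, List.mem_append]; exact Or.inl hf)
    · intro f hf
      rw [Walk.edges_cons, List.mem_cons] at hf ⊢
      rcases hf with rfl | hf
      · exact Or.inl rfl
      · exact Or.inr (by rw [Walk.edges_append, List.mem_append]; exact Or.inl hf)
    · intro f hf
      rw [Walk.edges_cons, List.mem_cons] at hf
      rcases hf with rfl | hf
      · exact Or.inl (by simp)
      · rw [Walk.edges_append, List.mem_append] at hf
        rcases hf with hf | hf
        · exact Or.inl (by rw [Walk.edges_cons, List.mem_cons]; exact Or.inr hf)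
        · exact Or.inr (C₀.edges_dropUntil_subset hb hf)
    · intro f hf
      rw [Walk.edges_cons, List.mem_cons] at hf
      rcases hf with rfl | hf
      · exact Or.inl (by simp)
      · rw [Walk.edges_append, List.mem_append] at hf
        rcases hf with hf | hf
        · exact Or.inl (by rw [Walk.edges_cons, List.mem_cons]; exact Or.inr hf)
        · rw [Walk.edges_reverse, List.mem_reverse] at hf
          exact Or.inr (C₀.edges_takeUntil_subset hb hf)
    · intro v hv
      rw [Walk.support_cons, List.mem_cons] at hv ⊢
      rcases hv with rfl | hv
      · exact Or.inl rfl
      · exact Or.inr (by rw [Walk.mem_support_append_iff]; exact Or.inl hv)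
    · intro v hv
      rw [Walk.support_cons, List.mem_cons] at hv ⊢
      rcases hv with rfl | hv
      · exact Or.inl rfl
      · exact Or.inr (by rw [Walk.mem_support_append_iff]; exact Or.inl hv)

end Aux
section Main

variable {V : Type*} [Fintype V] {G : SimpleGraph V}

lemma aux_second_nbr (hG : TwoConnected G) {u v : V} (h : G.Adj u v) :
    ∃ w : V, G.Adj u w ∧ w ≠ v := by
  classical
  have hcard := hG.1
  have hb : ∃ b : V, b ≠ v ∧ b ≠ u := by
    by_contra hcon
    push_neg at hcon
    have hsub : (Finset.univ : Finset V) ⊆ {v, u} := by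
      intro b _
      simp only [Finset.mem_insert, Finset.mem_singleton]
      by_cases hbv : b = v
      · exact Or.inl hbv
      · exact Or.inr (hcon b hbv)
    have hle := Finset.card_le_card hsub
    have h2 : ({v, u} : Finset V).card ≤ 2 := by
      apply le_trans (Finset.card_insert_le _ _); simp
    simp only [Finset.card_univ] at hle
    omega
  obtain ⟨b, hbv, hbu⟩ := hb
  have conn := hG.2.2 v
  obtain ⟨w0⟩ := conn.preconnected ⟨u, h.ne⟩ ⟨b, hbv⟩
  have hnn : ¬ w0.Nil := Walk.not_nil_of_ne (by simp [hbu.symm])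
  have hadj := w0.adj_snd hnn
  exact ⟨((w0.getVert 1) : V), hadj, (w0.getVert 1).2⟩

lemma aux_cycle_edge [DecidableEq V] (hG : TwoConnected G) {u v : V} (h : G.Adj u v) :
    ∃ D : G.Walk u u, D.IsCycle ∧ s(u, v) ∈ D.edges := by
  obtain ⟨w, huw, hwv⟩ := aux_second_nbr hG h
  obtain ⟨P, hP, huP⟩ := aux_avoid (hG.2.2 u) h.ne' huw.ne'
  let Q : G.Walk v u := P.append (Walk.cons huw.symm Walk.nil)
  have hQP : Q.IsPath := by
    apply aux_append_isPath hP
    · rw [Walk.cons_isPath_iff]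
      constructor
      · exact Walk.IsPath.nil
      · simp [huw.ne']
    · intro x hx hx'
      simp only [Walk.support_cons, Walk.support_nil, List.mem_cons, List.mem_singleton,
        List.not_mem_nil, or_false] at hx'
      rcases hx' with rfl | rfl
      · rfl
      · exact absurd hx huP
  refine ⟨Walk.cons h Q, ?_, ?_⟩
  · rw [Walk.cons_isCycle_iff]
    refine ⟨hQP, ?_⟩
    intro hmem
    simp only [Q, Walk.edges_append, Walk.edges_cons, Walk.edges_nil, List.mem_append,
      List.mem_cons, List.not_mem_nil, or_false] at hmem
    rcases hmem with hmem | hmem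
    · exact huP (P.fst_mem_support_of_mem_edges hmem)
    · rw [Sym2.eq_iff] at hmem
      rcases hmem with ⟨h1, h2⟩ | ⟨h1, h2⟩
      · exact h.ne h2.symm
      · exact hwv h2.symm
  · simp

lemma aux_key [DecidableEq V] (hG : TwoConnected G) {x y cc : V} (h : G.Adj x y)
    (C₂ : G.Walk cc cc) (hC : C₂.IsCycle) (hodd : Odd C₂.length)
    (he : s(x, y) ∉ C₂.edges) (hx : x ∈ C₂.support) :
    ∃ (b : V) (D : G.Walk b b), D.IsCycle ∧ Even D.length ∧ s(x, y) ∈ D.edges := by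
  set X := C₂.rotate x hx with hXdef
  have hXc : X.IsCycle := hC.rotate hx
  have hXodd : Odd X.length := by rw [hXdef, aux_length_rotate]; exact hodd
  have hXe : s(x, y) ∉ X.edges := by rw [hXdef, aux_mem_edges_rotate]; exact he
  by_cases hy : y ∈ X.support
  · set W : G.Walk x y := Walk.cons h Walk.nil with hWdef
    have hWp : W.IsPath := by
      rw [hWdef, Walk.cons_isPath_iff]
      exact ⟨Walk.IsPath.nil, by simp [h.ne]⟩
    have hdisj : ∀ v ∈ W.support, v ∈ X.support → v = x ∨ v = y := by
      intro v hv _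
      rw [hWdef] at hv
      simp only [Walk.support_cons, Walk.support_nil, List.mem_cons, List.mem_singleton,
        List.not_mem_nil, or_false] at hv
      tauto
    obtain ⟨E₁, E₂, hc1, hc2, hsum, hw1, hw2, _, _, _, _⟩ :=
      aux_compose hXc hy h.ne' hWp hdisj (fun _ => hXe)
    have hWlen : W.length = 1 := by simp [hWdef]
    rw [hWlen] at hsum
    have hoddsum : Odd (E₁.length + E₂.length) := by
      rw [hsum]; obtain ⟨j, hj⟩ := hXodd; exact ⟨j + 1, by omega⟩
    have hxyW : s(x, y) ∈ W.edges := by simp [hWdef]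
    rcases aux_parity2 hoddsum with ⟨hE, _⟩ | ⟨_, hE⟩
    · exact ⟨x, E₁, hc1, hE, hw1 _ hxyW⟩
    · exact ⟨x, E₂, hc2, hE, hw2 _ hxyW⟩
  · have hXnn : ¬ X.Nil := hXc.not_nil
    have hfe : s(x, X.getVert 1) ∈ X.edges := aux_first_edge X hXnn
    have hu0 : X.getVert 1 ∈ X.support := X.snd_mem_support_of_mem_edges hfe
    have hu0x : X.getVert 1 ≠ x := (X.adj_snd hXnn).ne'
    obtain ⟨Q, hQ, hxQ⟩ := aux_avoid (hG.2.2 x) h.ne' hu0x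
    obtain ⟨b', hb'S, q, r, hqr, hcond⟩ := aux_firsthit Q (S := {v | v ∈ X.support}) hu0
    have hb'X : b' ∈ X.support := hb'S
    have hqQp : q.IsPath := by
      have hQ' := hQ; rw [← hqr] at hQ'; exact hQ'.of_append_left
    have hxq : x ∉ q.support := fun hmem =>
      hxQ (by rw [← hqr]; exact Walk.subset_support_append_left _ _ hmem)
    have hb'x : b' ≠ x := fun hh => hxq (hh ▸ q.end_mem_support)
    have hWp : (Walk.cons h q).IsPath := by rw [Walk.cons_isPath_iff]; exact ⟨hqQp, hxq⟩
    have hdisj : ∀ v ∈ (Walk.cons h q).support, v ∈ X.support → v = x ∨ v = b' := by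
      intro v hv hvX
      rw [Walk.support_cons, List.mem_cons] at hv
      rcases hv with rfl | hv
      · exact Or.inl rfl
      · exact Or.inr (hcond v hv hvX)
    have hsafe : s(x, b') ∉ (Walk.cons h q).edges := by
      rw [Walk.edges_cons, List.mem_cons]
      rintro (hm | hm)
      · have hby: b' = y := Sym2.congr_right.mp hm
        exact hy (hby ▸ hb'X)
      · exact hxq (q.fst_mem_support_of_mem_edges hm)
    obtain ⟨E₁, E₂, hc1, hc2, hsum, hw1, hw2, _, _, _, _⟩ :=
      aux_compose hXc hb'X hb'x hWp hdisj (fun hmem => absurd hmem hsafe)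
    have hoddsum : Odd (E₁.length + E₂.length) := by
      rw [hsum]; obtain ⟨j, hj⟩ := hXodd
      exact ⟨(Walk.cons h q).length + j, by omega⟩
    have hxyW : s(x, y) ∈ (Walk.cons h q).edges := by simp
    rcases aux_parity2 hoddsum with ⟨hE, _⟩ | ⟨_, hE⟩
    · exact ⟨x, E₁, hc1, hE, hw1 _ hxyW⟩
    · exact ⟨x, E₂, hc2, hE, hw2 _ hxyW⟩

end Main
section CVE

variable {V : Type*} [Fintype V] {G : SimpleGraph V}

lemma aux_cve [DecidableEq V] (hG : TwoConnected G) {u₁ u₂ : V} (hadj : G.Adj u₁ u₂) :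
    ∀ n : ℕ, ∀ x : V, min (G.dist x u₁) (G.dist x u₂) ≤ n →
      ∃ (c : V) (Z : G.Walk c c), Z.IsCycle ∧ x ∈ Z.support ∧ s(u₁, u₂) ∈ Z.edges := by
  intro n
  induction n with
  | zero =>
    intro x hx
    have hmin0 : min (G.dist x u₁) (G.dist x u₂) = 0 := Nat.le_zero.mp hx
    obtain ⟨D, hD, hfD⟩ := aux_cycle_edge hG hadj
    rcases Nat.min_eq_zero_iff.mp hmin0 with h0 | h0
    · obtain ⟨p, hp⟩ := hG.2.1.exists_walk_length_eq_dist x u₁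
      rw [h0] at hp
      have hxu : x = u₁ := Walk.eq_of_length_eq_zero hp
      exact ⟨u₁, D, hD, by rw [hxu]; exact D.start_mem_support, hfD⟩
    · obtain ⟨p, hp⟩ := hG.2.1.exists_walk_length_eq_dist x u₂
      rw [h0] at hp
      have hxu : x = u₂ := Walk.eq_of_length_eq_zero hp
      exact ⟨u₁, D, hD, by rw [hxu]; exact D.snd_mem_support_of_mem_edges hfD, hfD⟩
  | succ n ih =>
    intro x hx
    by_cases hle : min (G.dist x u₁) (G.dist x u₂) ≤ n
    · exact ih x hle
    push_neg at hle
    have hmin : min (G.dist x u₁) (G.dist x u₂) = n + 1 := le_antisymm hx hle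
    obtain ⟨t₀, ht₀, ht₀d⟩ : ∃ t₀, (t₀ = u₁ ∨ t₀ = u₂) ∧ G.dist x t₀ = n + 1 := by
      rcases le_total (G.dist x u₁) (G.dist x u₂) with hle2 | hle2
      · rw [min_eq_left hle2] at hmin; exact ⟨u₁, Or.inl rfl, hmin⟩
      · rw [min_eq_right hle2] at hmin; exact ⟨u₂, Or.inr rfl, hmin⟩
    obtain ⟨p, hp⟩ := hG.2.1.exists_walk_length_eq_dist x t₀
    have hpn : ¬ p.Nil := by
      rw [Walk.not_nil_iff_lt_length, hp, ht₀d]; omega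
    have hxx' : G.Adj x (p.getVert 1) := p.adj_snd hpn
    set x' := p.getVert 1 with hx'def
    have hdx' : G.dist x' t₀ ≤ n := by
      have htail : p.tail.length + 1 = p.length := Walk.length_tail_add_one hpn
      have hd : G.dist x' t₀ ≤ p.tail.length := SimpleGraph.dist_le p.tail
      rw [hp, ht₀d] at htail
      omega
    have hmin' : min (G.dist x' u₁) (G.dist x' u₂) ≤ n := by
      rcases ht₀ with rfl | rfl
      · exact le_trans (min_le_left _ _) hdx'
      · exact le_trans (min_le_right _ _) hdx'
    obtain ⟨c, Z, hZ, hx'Z, hfZ⟩ := ih x' hmin'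
    by_cases hxZ : x ∈ Z.support
    · exact ⟨c, Z, hZ, hxZ, hfZ⟩
    · set Z₁ := Z.rotate x' hx'Z with hZ₁def
      have hZ₁c : Z₁.IsCycle := hZ.rotate hx'Z
      have hfZ₁ : s(u₁, u₂) ∈ Z₁.edges := by rw [hZ₁def, aux_mem_edges_rotate]; exact hfZ
      have hxZ₁ : x ∉ Z₁.support := by rw [hZ₁def, aux_mem_support_rotate]; exact hxZ
      obtain ⟨w₀, hw₀Z, hw₀x'⟩ : ∃ w₀, w₀ ∈ Z₁.support ∧ w₀ ≠ x' := by
        by_cases h1 : u₁ = x'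
        · exact ⟨u₂, Z₁.snd_mem_support_of_mem_edges hfZ₁,
            fun hh => hadj.ne (by rw [h1, hh])⟩
        · exact ⟨u₁, Z₁.fst_mem_support_of_mem_edges hfZ₁, h1⟩
      obtain ⟨R, hR, hx'R⟩ := aux_avoid (hG.2.2 x') hxx'.ne hw₀x'
      obtain ⟨z, hzS, q, r, hqr, hcond⟩ := aux_firsthit R (S := {v | v ∈ Z₁.support}) hw₀Z
      have hzZ : z ∈ Z₁.support := hzS
      have hqp : q.IsPath := by
        have hR' := hR; rw [← hqr] at hR'; exact hR'.of_append_left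
      have hx'q : x' ∉ q.support := fun hm =>
        hx'R (by rw [← hqr]; exact Walk.subset_support_append_left _ _ hm)
      have hzx' : z ≠ x' := fun hh => hx'q (hh ▸ q.end_mem_support)
      obtain ⟨htp, hdp, hlen, hjunc⟩ := aux_split hZ₁c hzZ hzx'
      set t₃ := Z₁.takeUntil z hzZ with ht₃def
      set d₃ := Z₁.dropUntil z hzZ with hd₃def
      have hfsplit : s(u₁, u₂) ∈ t₃.edges ∨ s(u₁, u₂) ∈ d₃.edges := by
        have hh := hfZ₁
        conv at hh => rw [← Z₁.take_spec hzZ]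
        rw [Walk.edges_append, List.mem_append] at hh
        exact hh
      have hqrev : q.reverse.IsPath := hqp.reverse
      rcases hfsplit with hf | hf
      · have hp₀ : (t₃.append q.reverse).IsPath := by
          refine aux_append_isPath htp hqrev ?_
          intro v hv hv'
          rw [Walk.support_reverse, List.mem_reverse] at hv'
          exact hcond v hv' (Z₁.support_takeUntil_subset hzZ hv)
        have hne₀ : s(x, x') ∉ (t₃.append q.reverse).edges := by
          rw [Walk.edges_append, List.mem_append]
          rintro (hm | hm)
          · exact hxZ₁ (Z₁.support_takeUntil_subset hzZ (t₃.fst_mem_support_of_mem_edges hm))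
          · rw [Walk.edges_reverse, List.mem_reverse] at hm
            exact hx'q (q.snd_mem_support_of_mem_edges hm)
        refine ⟨x, Walk.cons hxx' (t₃.append q.reverse), ?_, by simp, ?_⟩
        · rw [Walk.cons_isCycle_iff]; exact ⟨hp₀, hne₀⟩
        · rw [Walk.edges_cons, List.mem_cons]
          exact Or.inr (by rw [Walk.edges_append, List.mem_append]; exact Or.inl hf)
      · have hp₀ : (d₃.reverse.append q.reverse).IsPath := by
          refine aux_append_isPath hdp.reverse hqrev ?_
          intro v hv hv'
          rw [Walk.support_reverse, List.mem_reverse] at hv hv'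
          exact hcond v hv' (Z₁.support_dropUntil_subset hzZ hv)
        have hne₀ : s(x, x') ∉ (d₃.reverse.append q.reverse).edges := by
          rw [Walk.edges_append, List.mem_append]
          rintro (hm | hm)
          · rw [Walk.edges_reverse, List.mem_reverse] at hm
            exact hxZ₁ (Z₁.support_dropUntil_subset hzZ (d₃.fst_mem_support_of_mem_edges hm))
          · rw [Walk.edges_reverse, List.mem_reverse] at hm
            exact hx'q (q.snd_mem_support_of_mem_edges hm)
        refine ⟨x, Walk.cons hxx' (d₃.reverse.append q.reverse), ?_, by simp, ?_⟩
        · rw [Walk.cons_isCycle_iff]; exact ⟨hp₀, hne₀⟩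
        · rw [Walk.edges_cons, List.mem_cons]
          refine Or.inr ?_
          rw [Walk.edges_append, List.mem_append]
          exact Or.inl (by rw [Walk.edges_reverse, List.mem_reverse]; exact hf)

end CVE
/-- In a 2-connected graph, every edge not lying on a given odd cycle is
contained in an even cycle. -/
theorem stmt_0 {V : Type*} [Fintype V] (G : SimpleGraph V) (hG : TwoConnected G)
    {a : V} (C : G.Walk a a) (hC : C.IsCycle) (hCodd : Odd C.length)
    (e : Sym2 V) (he : e ∈ G.edgeSet) (heC : e ∉ C.edges) :
    ∃ (b : V) (D : G.Walk b b), D.IsCycle ∧ Even D.length ∧ e ∈ D.edges := by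
  letI : DecidableEq V := Classical.decEq V
  induction e using Sym2.ind with
  | _ x y =>
  have h : G.Adj x y := (SimpleGraph.mem_edgeSet G).mp he
  by_cases hx : x ∈ C.support
  · exact aux_key hG h C hC hCodd heC hx
  by_cases hy : y ∈ C.support
  · have heC' : s(y, x) ∉ C.edges := by rwa [Sym2.eq_swap]
    obtain ⟨b, D, h1, h2, h3⟩ := aux_key hG h.symm C hC hCodd heC' hy
    exact ⟨b, D, h1, h2, by rwa [Sym2.eq_swap] at h3⟩
  -- both endpoints off C
  have hCnn : ¬ C.Nil := hC.not_nil
  have hfe : s(a, C.getVert 1) ∈ C.edges := aux_first_edge C hCnn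
  have hadj12 : G.Adj a (C.getVert 1) := C.adj_snd hCnn
  obtain ⟨c, Z, hZc, hxZ, hfZ⟩ :=
    aux_cve hG hadj12 (min (G.dist x a) (G.dist x (C.getVert 1))) x le_rfl
  set Z₁ := Z.rotate x hxZ with hZ₁def
  have hZ₁c : Z₁.IsCycle := hZc.rotate hxZ
  have hfZ₁ : s(a, C.getVert 1) ∈ Z₁.edges := by rw [hZ₁def, aux_mem_edges_rotate]; exact hfZ
  have hu₁Z : a ∈ Z₁.support := Z₁.fst_mem_support_of_mem_edges hfZ₁
  have hu₂Z : C.getVert 1 ∈ Z₁.support := Z₁.snd_mem_support_of_mem_edges hfZ₁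
  have hu₁C : a ∈ C.support := C.start_mem_support
  have hu₂C : C.getVert 1 ∈ C.support := C.snd_mem_support_of_mem_edges hfe
  have hu₁x : a ≠ x := fun hh => hx (hh ▸ hu₁C)
  obtain ⟨htp, hdp, hlenZ, hjuncZ⟩ := aux_split hZ₁c hu₁Z hu₁x
  set t := Z₁.takeUntil a hu₁Z with htdef
  set d := Z₁.dropUntil a hu₁Z with hddef
  obtain ⟨b₁, hb₁S, q₁, r₁, hqr₁, hcond₁⟩ := aux_firsthit t (S := {v | v ∈ C.support}) hu₁C
  obtain ⟨a₁, ha₁S, q₂, r₂, hqr₂, hcond₂⟩ :=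
    aux_firsthit d.reverse (S := {v | v ∈ C.support}) hu₁C
  have hb₁C : b₁ ∈ C.support := hb₁S
  have ha₁C : a₁ ∈ C.support := ha₁S
  have hq₁p : q₁.IsPath := by
    have hh := htp; rw [← hqr₁] at hh; exact hh.of_append_left
  have hq₂p : q₂.IsPath := by
    have hh := hdp.reverse; rw [← hqr₂] at hh; exact hh.of_append_left
  have hq₁t : ∀ v ∈ q₁.support, v ∈ t.support := fun v hv => by
    rw [← hqr₁]; exact Walk.subset_support_append_left _ _ hv
  have hq₂d : ∀ v ∈ q₂.support, v ∈ d.support := fun v hv => by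
    have hh : v ∈ d.reverse.support := by
      rw [← hqr₂]; exact Walk.subset_support_append_left _ _ hv
    rwa [Walk.support_reverse, List.mem_reverse] at hh
  have hnotboth : ¬ (a ∈ q₁.support ∧ a ∈ q₂.support) := by
    rintro ⟨h1, h2⟩
    have hb₁a : a = b₁ := hcond₁ a h1 hu₁C
    have ha₁a : a = a₁ := hcond₂ a h2 hu₁C
    subst hb₁a; subst ha₁a
    -- q₁ = t and q₂ = d.reverse
    have htfull : ∀ v ∈ t.support, v ∈ C.support → v = a := by
      cases r₁ with
      | nil =>
        rw [Walk.append_nil] at hqr₁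
        intro v hv hvC
        exact hcond₁ v (by rw [← hqr₁] at hv; exact hv) hvC
      | cons h' r'' =>
        exfalso
        have ht2 : t.support = q₁.support ++ (Walk.cons h' r'').support.tail := by
          rw [← hqr₁, Walk.support_append]
        have hnd := htp.support_nodup
        rw [ht2] at hnd
        have hdisj := (List.nodup_append'.mp hnd).2.2
        refine hdisj h1 ?_
        rw [Walk.support_cons, List.tail_cons]
        exact r''.end_mem_support
    have hdfull : ∀ v ∈ d.support, v ∈ C.support → v = a := by
      cases r₂ with
      | nil =>
        rw [Walk.append_nil] at hqr₂
        intro v hv hvC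
        refine hcond₂ v ?_ hvC
        rw [hqr₂, Walk.support_reverse, List.mem_reverse]
        exact hv
      | cons h' r'' =>
        exfalso
        have ht2 : d.reverse.support = q₂.support ++ (Walk.cons h' r'').support.tail := by
          rw [← hqr₂, Walk.support_append]
        have hnd := hdp.reverse.support_nodup
        rw [ht2] at hnd
        have hdisj := (List.nodup_append'.mp hnd).2.2
        refine hdisj h2 ?_
        rw [Walk.support_cons, List.tail_cons]
        exact r''.end_mem_support
    have hu₂td : C.getVert 1 ∈ t.support ∨ C.getVert 1 ∈ d.support := by
      have hh := hu₂Z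
      rw [← Z₁.take_spec hu₁Z, Walk.mem_support_append_iff] at hh
      exact hh
    rcases hu₂td with hh | hh
    · exact hadj12.ne (htfull _ hh hu₂C).symm
    · exact hadj12.ne (hdfull _ hh hu₂C).symm
  have ha₁b₁ : a₁ ≠ b₁ := by
    intro hh
    have h1 := hq₁t b₁ q₁.end_mem_support
    have h2 := hq₂d a₁ q₂.end_mem_support
    rw [hh] at h2
    rcases hjuncZ b₁ h1 h2 with hh2 | hh2
    · exact hx (hh2 ▸ hb₁C)
    · refine hnotboth ⟨?_, ?_⟩
      · rw [← hh2]; exact q₁.end_mem_support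
      · rw [← hh2, ← hh]; exact q₂.end_mem_support
  -- hjuncZ gives v = x ∨ v = a for common vertices of t and d
  set W := q₂.reverse.append q₁ with hWdef
  have hWp : W.IsPath := by
    refine aux_append_isPath hq₂p.reverse hq₁p ?_
    intro v hv hv'
    rw [Walk.support_reverse, List.mem_reverse] at hv
    rcases hjuncZ v (hq₁t v hv') (hq₂d v hv) with hh | hh
    · exact hh
    · exact ((hnotboth ⟨hh ▸ hv', hh ▸ hv⟩).elim)
  have hxW : x ∈ W.support := by
    rw [hWdef, Walk.mem_support_append_iff]
    exact Or.inr q₁.start_mem_support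
  have hWC : ∀ v ∈ W.support, v ∈ C.support → v = a₁ ∨ v = b₁ := by
    intro v hv hvC
    rw [hWdef, Walk.mem_support_append_iff] at hv
    rcases hv with hv | hv
    · rw [Walk.support_reverse, List.mem_reverse] at hv
      exact Or.inl (hcond₂ v hv hvC)
    · exact Or.inr (hcond₁ v hv hvC)
  have hxa₁ : x ≠ a₁ := fun hh => hx (hh ▸ ha₁C)
  have hxb₁ : x ≠ b₁ := fun hh => hx (hh ▸ hb₁C)
  set C₀ := C.rotate a₁ ha₁C with hC₀def
  have hC₀c : C₀.IsCycle := hC.rotate ha₁C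
  have hC₀odd : Odd C₀.length := by rw [hC₀def, aux_length_rotate]; exact hCodd
  have hb₁C₀ : b₁ ∈ C₀.support := by rw [hC₀def, aux_mem_support_rotate]; exact hb₁C
  have hC₀edges : ∀ f, f ∈ C₀.edges ↔ f ∈ C.edges := fun f => by
    rw [hC₀def, aux_mem_edges_rotate]
  have hdisj₀ : ∀ v ∈ W.support, v ∈ C₀.support → v = a₁ ∨ v = b₁ := by
    intro v hv hvC
    exact hWC v hv (by rw [hC₀def, aux_mem_support_rotate] at hvC; exact hvC)
  have hsafe₀ : s(a₁, b₁) ∈ W.edges → s(a₁, b₁) ∉ C₀.edges := by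
    intro hm
    exfalso
    have hl1 := aux_edge_ends hWp hm
    have hsl : W.support.length = 2 := by rw [Walk.length_support, hl1]
    have h3 : ({x, a₁, b₁} : Finset V) ⊆ W.support.toFinset := by
      intro v hv
      rw [List.mem_toFinset]
      simp only [Finset.mem_insert, Finset.mem_singleton] at hv
      rcases hv with rfl | rfl | rfl
      · exact hxW
      · rw [hWdef, Walk.mem_support_append_iff]
        left
        rw [Walk.support_reverse, List.mem_reverse]
        exact q₂.end_mem_support
      · rw [hWdef, Walk.mem_support_append_iff]
        exact Or.inr q₁.end_mem_support
    have hc3 : ({x, a₁, b₁} : Finset V).card = 3 := by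
      rw [Finset.card_insert_of_notMem (by simp [hxa₁, hxb₁]),
        Finset.card_insert_of_notMem (by simp [ha₁b₁]), Finset.card_singleton]
    have hle1 := Finset.card_le_card h3
    have hle2 := List.toFinset_card_le W.support
    omega
  obtain ⟨E₁, E₂, hc1, hc2, hsum, hw1, hw2, he1, he2, hs1, hs2⟩ :=
    aux_compose hC₀c hb₁C₀ ha₁b₁.symm hWp hdisj₀ hsafe₀
  have hoddsum : Odd (E₁.length + E₂.length) := by
    rw [hsum]; obtain ⟨j, hj⟩ := hC₀odd; exact ⟨W.length + j, by omega⟩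
  by_cases heW : s(x, y) ∈ W.edges
  · rcases aux_parity2 hoddsum with ⟨hE, _⟩ | ⟨_, hE⟩
    · exact ⟨a₁, E₁, hc1, hE, hw1 _ heW⟩
    · exact ⟨a₁, E₂, hc2, hE, hw2 _ heW⟩
  · rcases aux_parity2 hoddsum with ⟨_, hE⟩ | ⟨hE, _⟩
    · refine aux_key hG h E₂ hc2 hE ?_ (hs2 x hxW)
      intro hm
      rcases he2 _ hm with hm' | hm'
      · exact heW hm'
      · exact heC ((hC₀edges _).mp hm')
    · refine aux_key hG h E₁ hc1 hE ?_ (hs1 x hxW)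
      intro hm
      rcases he1 _ hm with hm' | hm'
      · exact heW hm'
      · exact heC ((hC₀edges _).mp hm')
end

section
/- Let G be a 2-connected simple graph such that for every edge e of G, the graph G − e (G with the edge e deleted) is not bipartite. Then every edge of G is contained in a cycle of even length. -/
set_option linter.unusedSectionVars false
set_option linter.unnecessarySimpa false

open SimpleGraph

namespace SimpleGraph

variable {V : Type*} [DecidableEq V] {G : SimpleGraph V}

lemma closed_length_ne_one {u : V} (C : G.Walk u u) : C.length ≠ 1 := by
  cases C with
  | nil => simp
  | cons h q =>
    cases q with
    | nil => exact fun _ => G.irrefl h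
    | cons h' q' => simp [Nat.succ_ne_zero]

lemma exists_prefix_hit {a c : V} (T : G.Walk a c) (S : Set V) (hc : c ∈ S) :
    ∃ (b : V) (T1 : G.Walk a b) (T2 : G.Walk b c), b ∈ S ∧ T1.append T2 = T ∧
      ∀ w ∈ T1.support, w ∈ S → w = b := by
  induction T with
  | nil => exact ⟨_, .nil, .nil, hc, rfl, by simp⟩
  | @cons u v w h q ih =>
    by_cases hu : u ∈ S
    · exact ⟨u, .nil, Walk.cons h q, hu, rfl, by simp⟩
    · obtain ⟨b, T1, T2, hb, hsplit, hmin⟩ := ih hc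
      refine ⟨b, Walk.cons h T1, T2, hb, by rw [Walk.cons_append, hsplit], ?_⟩
      intro r hr hrS
      rw [Walk.support_cons, List.mem_cons] at hr
      rcases hr with rfl | hr'
      · exact absurd hrS hu
      · exact hmin r hr' hrS

lemma IsPath.append' {a b c : V} {p : G.Walk a b} {q : G.Walk b c}
    (hp : p.IsPath) (hq : q.IsPath) (h : ∀ w ∈ p.support, w ∈ q.support → w = b) :
    (p.append q).IsPath := by
  rw [Walk.isPath_def, Walk.support_append]
  refine List.Nodup.append (Walk.isPath_def _ |>.mp hp) ((Walk.isPath_def _ |>.mp hq).tail) ?_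
  intro r hrp hrq
  have hrq' : r ∈ q.support := by
    rw [q.support_eq_cons]; exact List.mem_cons_of_mem _ hrq
  have : r = b := h r hrp hrq'
  subst this
  have := Walk.isPath_def _ |>.mp hq
  rw [q.support_eq_cons] at this
  exact (List.nodup_cons.mp this).1 hrq

lemma length_take_add_drop {s t z : V} (P : G.Walk s t) (hz : z ∈ P.support) :
    (P.takeUntil z hz).length + (P.dropUntil z hz).length = P.length := by
  have := congrArg Walk.length (P.take_spec hz)
  rwa [Walk.length_append] at this

lemma support_take_append_drop {s t z : V} (P : G.Walk s t) (hz : z ∈ P.support) :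
    (P.takeUntil z hz).support ++ (P.dropUntil z hz).support.tail = P.support := by
  have := congrArg Walk.support (P.take_spec hz)
  rwa [Walk.support_append] at this

lemma mem_take_drop {s t z r : V} {P : G.Walk s t} (hP : P.IsPath) (hz : z ∈ P.support)
    (h1 : r ∈ (P.takeUntil z hz).support) (h2 : r ∈ (P.dropUntil z hz).support) : r = z := by
  have hsupp := support_take_append_drop P hz
  have hnd : P.support.Nodup := Walk.isPath_def _ |>.mp hP
  rw [← hsupp] at hnd
  rw [(P.dropUntil z hz).support_eq_cons, List.mem_cons] at h2
  rcases h2 with h2 | h2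
  · exact h2
  · exact absurd h1 (fun h1 => (List.disjoint_of_nodup_append hnd) h1 h2)

lemma start_not_mem_dropUntil {s t z : V} {P : G.Walk s t} (hP : P.IsPath)
    (hz : z ∈ P.support) (hzs : z ≠ s) : s ∉ (P.dropUntil z hz).support := by
  intro h
  exact hzs ((mem_take_drop hP hz (P.takeUntil z hz).start_mem_support h).symm)

lemma end_not_mem_takeUntil {s t z : V} {P : G.Walk s t} (hP : P.IsPath)
    (hz : z ∈ P.support) (hzt : z ≠ t) : t ∉ (P.takeUntil z hz).support := by
  intro h
  exact hzt ((mem_take_drop hP hz h (P.dropUntil z hz).end_mem_support).symm)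

lemma length_rotate {u v : V} (C : G.Walk v v) (h : u ∈ C.support) :
    (C.rotate u h).length = C.length := by
  unfold Walk.rotate
  rw [Walk.length_append, Nat.add_comm, length_take_add_drop]

lemma mem_support_tail_of_closed {u : V} {C : G.Walk u u} (hC : 0 < C.length) :
    ∀ w ∈ C.support, w ∈ C.support.tail := by
  cases C with
  | nil => simp at hC
  | cons h q =>
    intro w hw
    rw [Walk.support_cons, List.mem_cons] at hw
    rcases hw with rfl | hw'
    · simpa using q.end_mem_support
    · simpa using hw'

lemma arcs {u b : V} {C : G.Walk u u} (hnd : C.support.tail.Nodup)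
    (hb : b ∈ C.support) (hbu : b ≠ u) :
    ∃ (A1 : G.Walk u b) (A2 : G.Walk b u), A1.IsPath ∧ A2.IsPath ∧
      A1.length + A2.length = C.length ∧
      (∀ w ∈ A1.support, w ∈ C.support) ∧ (∀ w ∈ A2.support, w ∈ C.support) ∧
      (∀ f ∈ A1.edges, f ∈ C.edges) ∧ (∀ f ∈ A2.edges, f ∈ C.edges) ∧
      (∀ w ∈ A1.support, w ∈ A2.support → w = u ∨ w = b) := by
  cases C with
  | nil => simp at hb; exact absurd hb hbu
  | @cons _ d _ h q =>
    have hq : q.IsPath := by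
      rw [Walk.isPath_def]
      simpa using hnd
    have hbq : b ∈ q.support := by
      rw [Walk.support_cons, List.mem_cons] at hb
      exact hb.resolve_left hbu
    have huq : u ∉ (q.takeUntil b hbq).support := end_not_mem_takeUntil hq hbq hbu
    refine ⟨Walk.cons h (q.takeUntil b hbq), q.dropUntil b hbq,
      Walk.cons_isPath_iff _ _ |>.mpr ⟨hq.takeUntil hbq, huq⟩, hq.dropUntil hbq, ?_, ?_, ?_, ?_, ?_, ?_⟩
    · have := length_take_add_drop q hbq
      simp only [Walk.length_cons]
      omega
    · intro w hw
      rw [Walk.support_cons, List.mem_cons] at hw ⊢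
      exact hw.imp id (fun hw' => q.support_takeUntil_subset hbq hw')
    · intro w hw
      rw [Walk.support_cons, List.mem_cons]
      exact Or.inr (q.support_dropUntil_subset hbq hw)
    · intro f hf
      rw [Walk.edges_cons, List.mem_cons] at hf ⊢
      exact hf.imp id (fun hf' => q.edges_takeUntil_subset hbq hf')
    · intro f hf
      rw [Walk.edges_cons, List.mem_cons]
      exact Or.inr (q.edges_dropUntil_subset hbq hf)
    · intro w hw1 hw2
      rw [Walk.support_cons, List.mem_cons] at hw1
      rcases hw1 with rfl | hw1
      · exact Or.inl rfl
      · exact Or.inr (mem_take_drop hq hbq hw1 hw2)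

lemma arcs_rotate {x b c : V} {C : G.Walk c c} (hnd : C.support.tail.Nodup)
    (hlen : 0 < C.length) (hx : x ∈ C.support) (hb : b ∈ C.support) (hxb : x ≠ b) :
    ∃ (A1 : G.Walk x b) (A2 : G.Walk b x), A1.IsPath ∧ A2.IsPath ∧
      A1.length + A2.length = C.length ∧
      (∀ w ∈ A1.support, w ∈ C.support) ∧ (∀ w ∈ A2.support, w ∈ C.support) ∧
      (∀ f ∈ A1.edges, f ∈ C.edges) ∧ (∀ f ∈ A2.edges, f ∈ C.edges) := by
  set C' := C.rotate x hx with hC'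
  have hrot := C.support_rotate x hx
  have hnd' : C'.support.tail.Nodup := hrot.nodup_iff.mpr hnd
  have hmemC' : ∀ w, w ∈ C'.support → w ∈ C.support := by
    intro w hw
    rw [C'.support_eq_cons, List.mem_cons] at hw
    rcases hw with rfl | hw
    · exact hx
    · have : w ∈ C.support.tail := hrot.perm.mem_iff.mp hw
      rw [C.support_eq_cons]
      exact List.mem_cons_of_mem _ this
  have hbC' : b ∈ C'.support := by
    rw [C'.support_eq_cons, List.mem_cons]
    exact Or.inr (hrot.perm.mem_iff.mpr (mem_support_tail_of_closed hlen b hb))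
  have hedg : ∀ f, f ∈ C'.edges → f ∈ C.edges := fun f hf =>
    (C.rotate_edges x hx).perm.mem_iff.mp hf
  obtain ⟨A1, A2, h1, h2, hlen2, hs1, hs2, he1, he2, _⟩ := arcs hnd' hbC' (Ne.symm hxb)
  refine ⟨A1, A2, h1, h2, ?_, fun w hw => hmemC' w (hs1 w hw), fun w hw => hmemC' w (hs2 w hw),
    fun f hf => hedg f (he1 f hf), fun f hf => hedg f (he2 f hf)⟩
  rw [hlen2, hC', length_rotate]

lemma arc_parity {x b c : V} {C : G.Walk c c} (hnd : C.support.tail.Nodup)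
    (hodd : Odd C.length) (hx : x ∈ C.support) (hb : b ∈ C.support) (hxb : x ≠ b) (k : ℕ) :
    ∃ A : G.Walk x b, A.IsPath ∧ Odd (A.length + k) ∧
      (∀ w ∈ A.support, w ∈ C.support) ∧ (∀ f ∈ A.edges, f ∈ C.edges) := by
  have hlen : 0 < C.length := by
    rcases hodd with ⟨m, hm⟩; omega
  obtain ⟨A1, A2, h1, h2, hsum, hs1, hs2, he1, he2⟩ := arcs_rotate hnd hlen hx hb hxb
  by_cases hpar : Odd (A1.length + k)
  · exact ⟨A1, h1, hpar, hs1, he1⟩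
  · refine ⟨A2.reverse, h2.reverse, ?_, ?_, ?_⟩
    · rw [Walk.length_reverse]
      rcases Nat.even_or_odd (A2.length + k) with he | ho
      · exfalso
        rcases he with ⟨m, hm⟩
        rcases Nat.not_odd_iff_even.mp hpar with ⟨m', hm'⟩
        rcases hodd with ⟨m'', hm''⟩
        omega
      · exact ho
    · intro w hw
      rw [Walk.support_reverse, List.mem_reverse] at hw
      exact hs2 w hw
    · intro f hf
      rw [Walk.edges_reverse, List.mem_reverse] at hf
      exact he2 f hf

lemma exists_other_support {c : V} {C : G.Walk c c} (hnd : C.support.tail.Nodup)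
    (h2 : 2 ≤ C.length) (u : V) : ∃ z ∈ C.support, z ≠ u := by
  have hlen : C.support.tail.length = C.length := by
    have := C.length_support
    have : C.support.length = C.length + 1 := C.length_support
    have h0 := C.support_eq_cons
    rw [h0] at this
    simpa using this
  match htail : C.support.tail, hnd2 : hnd with
  | [], _ => rw [htail] at hlen; simp at hlen; omega
  | [a], _ => rw [htail] at hlen; simp at hlen; omega
  | a :: b :: rest, _ =>
    rw [htail] at hnd
    have hab : a ≠ b := by
      rcases List.nodup_cons.mp hnd with ⟨ha, _⟩
      intro h; exact ha (h ▸ List.mem_cons_self)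
    have hamem : a ∈ C.support := by
      rw [C.support_eq_cons, htail]; simp
    have hbmem : b ∈ C.support := by
      rw [C.support_eq_cons, htail]; simp
    by_cases hau : a = u
    · exact ⟨b, hbmem, fun h => hab (hau.trans h.symm ▸ hau ▸ rfl)⟩
    · exact ⟨a, hamem, hau⟩

lemma closed_cons {u : V} (w : G.Walk u u) (h : w.length ≠ 0) :
    ∃ (d : V) (hadj : G.Adj u d) (q : G.Walk d u), w = Walk.cons hadj q := by
  cases w with
  | nil => simp at h
  | cons hadj q => exact ⟨_, hadj, q, rfl⟩

lemma closed_cons' {u t : V} (w : G.Walk u t) (h : w.length ≠ 0) :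
    ∃ (d : V) (hadj : G.Adj u d) (q : G.Walk d t), w = Walk.cons hadj q := by
  cases w with
  | nil => simp at h
  | cons hadj q => exact ⟨_, hadj, q, rfl⟩

lemma tight_aux : ∀ n (c : V) (w : G.Walk c c), w.length = n → Odd w.length →
    ∃ (d : V) (w' : G.Walk d d), w'.support.tail.Nodup ∧ Odd w'.length := by
  intro n
  induction n using Nat.strong_induction_on with
  | _ n ih =>
    intro c w hn hodd
    by_cases hnd : w.support.tail.Nodup
    · exact ⟨c, w, hnd, hodd⟩
    · obtain ⟨b, hb⟩ : ∃ b, 2 ≤ w.support.tail.count b := by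
        by_contra hc
        push_neg at hc
        exact hnd (List.nodup_iff_count_le_one.mpr (fun a => by have := hc a; omega))
      have hbmem : b ∈ w.support := by
        rw [w.support_eq_cons]
        exact List.mem_cons_of_mem _ (List.count_pos_iff.mp (by omega))
      have hlen' : (w.rotate b hbmem).length = w.length := length_rotate w hbmem
      have hcount : 2 ≤ (w.rotate b hbmem).support.tail.count b := by
        rwa [(w.support_rotate b hbmem).perm.count_eq]
      obtain ⟨d, hadj, q, heq⟩ := closed_cons (w.rotate b hbmem)
        (by rw [hlen', hn]; rcases hodd with ⟨m, hm⟩; omega)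
      rw [heq] at hcount hlen'
      simp only [Walk.support_cons, List.tail_cons, Walk.length_cons] at hcount hlen'
      have hbq : b ∈ q.support := List.count_pos_iff.mp (by omega)
      have hcnt1 : (q.takeUntil b hbq).support.count b = 1 := q.count_support_takeUntil_eq_one hbq
      have hsum : (q.takeUntil b hbq).length + (q.dropUntil b hbq).length = q.length :=
        length_take_add_drop q hbq
      have hrpos : 0 < (q.dropUntil b hbq).length := by
        by_contra h0
        push_neg at h0
        have hr0 : (q.dropUntil b hbq).length = 0 := by omega
        have : q.dropUntil b hbq = Walk.nil := (Walk.length_eq_zero_iff.mp hr0).eq_nil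
        have hqsupp := support_take_append_drop q hbq
        rw [this] at hqsupp
        simp only [Walk.support_nil, List.tail_cons, List.append_nil] at hqsupp
        rw [← hqsupp] at hcount
        omega
      have hw1len : (Walk.cons hadj (q.takeUntil b hbq)).length = (q.takeUntil b hbq).length + 1 :=
        Walk.length_cons _ _
      have hodd' : Odd (q.length + 1) := by rw [hlen']; exact hodd
      rcases Nat.even_or_odd (q.takeUntil b hbq).length with he | ho
      · -- w1 = cons hadj take is odd
        refine ih (Walk.cons hadj (q.takeUntil b hbq)).length ?_ b _ rfl ?_
        · rw [hw1len, ← hn, ← hlen']; omega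
        · rw [hw1len]
          rcases he with ⟨m, hm⟩
          exact ⟨m, by omega⟩
      · -- w2 = drop is odd
        refine ih (q.dropUntil b hbq).length ?_ b _ rfl ?_
        · rw [← hn, ← hlen']; omega
        · rcases ho with ⟨m, hm⟩
          rcases hodd' with ⟨m', hm'⟩
          exact ⟨m' - m - 1, by omega⟩

lemma exists_odd_closed (h : ¬ G.Colorable 2) : ∃ (c : V) (w : G.Walk c c), Odd w.length := by
  by_contra hall
  push_neg at hall
  apply h
  have key : ∀ (c : V) (w : G.Walk c c), Even w.length := by
    intro c w
    exact Nat.not_odd_iff_even.mp (hall c w)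
  classical
  let rep : V → V := fun v => (G.connectedComponentMk v).out
  have hreach : ∀ v, G.Reachable (rep v) v := fun v =>
    ConnectedComponent.exact ((G.connectedComponentMk v).out_eq)
  let wk : ∀ v, G.Walk (rep v) v := fun v => Classical.choice (hreach v)
  have hvalid : ∀ {u v : V}, G.Adj u v →
      ¬ (decide (Even (wk u).length) = decide (Even (wk v).length)) := by
    intro u v huv hEq
    have hrep : rep u = rep v := by
      simp only [rep]
      rw [ConnectedComponent.connectedComponentMk_eq_of_adj huv]
    have hWe := key _ (((wk u).append (Walk.cons huv (wk v).reverse)).copy rfl hrep.symm)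
    rw [Walk.length_copy, Walk.length_append, Walk.length_cons, Walk.length_reverse] at hWe
    rcases hWe with ⟨m, hm⟩
    rcases Nat.even_or_odd (wk u).length with h1 | h1
    · have h2 : Odd (wk v).length := by rcases h1 with ⟨a, ha⟩; exact ⟨m - a - 1, by omega⟩
      simp [h1, Nat.not_even_iff_odd.mpr h2] at hEq
    · have h2 : Even (wk v).length := by rcases h1 with ⟨a, ha⟩; exact ⟨m - a - 1, by omega⟩
      simp [h2, Nat.not_even_iff_odd.mpr h1] at hEq
  have C : G.Coloring Bool := Coloring.mk (fun v => decide (Even (wk v).length)) hvalid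
  simpa using C.colorable

lemma exists_walk_avoid {v : V} (hv : (G.induce {x | x ≠ v}).Connected) {a b : V}
    (ha : a ≠ v) (hb : b ≠ v) : ∃ w : G.Walk a b, v ∉ w.support := by
  have hr := hv.preconnected ⟨a, ha⟩ ⟨b, hb⟩
  obtain ⟨p⟩ := hr
  refine ⟨p.map (Embedding.induce {x | x ≠ v}).toHom, ?_⟩
  intro hmem
  have hmem : v ∈ (p.map (Embedding.induce {x | x ≠ v}).toHom).support := hmem
  rw [Walk.support_map, List.mem_map] at hmem
  obtain ⟨s, _, hs⟩ := hmem
  exact s.2 hs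

lemma exists_base_path [Fintype V] (hcard : 2 < Fintype.card V)
    (h2 : ∀ v, (G.induce {w | w ≠ v}).Connected) {x y : V} (hx : G.Adj x y) :
    ∃ p : G.Walk y x, p.IsPath ∧ s(x, y) ∉ p.edges := by
  obtain ⟨z, hzx, hzy⟩ : ∃ z, z ≠ x ∧ z ≠ y := by
    by_contra hc
    push_neg at hc
    have hsub : (Finset.univ : Finset V) ⊆ {x, y} := by
      intro r _
      rcases eq_or_ne r x with rfl | hr
      · simp
      · simp [hc r hr]
    have h1 := Finset.card_le_card hsub
    have h2 : ({x, y} : Finset V).card ≤ 2 :=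
      (Finset.card_insert_le _ _).trans (by simp)
    have h3 : Finset.univ.card = Fintype.card V := Finset.card_univ
    omega
  obtain ⟨w1, hw1⟩ := exists_walk_avoid (h2 x) hx.ne' hzx
  obtain ⟨w2, hw2⟩ := exists_walk_avoid (h2 y) hzy hx.ne
  refine ⟨(w1.append w2).bypass, Walk.bypass_isPath _, ?_⟩
  intro he
  have := (w1.append w2).edges_bypass_subset he
  rw [Walk.edges_append, List.mem_append] at this
  rcases this with h | h
  · exact hw1 (w1.fst_mem_support_of_mem_edges h)
  · exact hw2 (w2.snd_mem_support_of_mem_edges h)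

lemma splice {x y v w : V} (h2 : ∀ v, (G.induce {r | r ≠ v}).Connected)
    (hx : G.Adj x y) (p : G.Walk y x) (hp : p.IsPath) (hpe : s(x, y) ∉ p.edges)
    (hw : w ∈ p.support) (hv : v ∉ p.support) (hadj : G.Adj v w) :
    ∃ q : G.Walk y x, q.IsPath ∧ s(x, y) ∉ q.edges ∧ v ∈ q.support := by
  have hvw : v ≠ w := fun h => hv (h ▸ hw)
  have hvx : v ≠ x := fun h => hv (h ▸ p.end_mem_support)
  have hvy : v ≠ y := fun h => hv (h ▸ p.start_mem_support)
  -- a target vertex on p distinct from w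
  obtain ⟨t, htp, htw⟩ : ∃ t, t ∈ p.support ∧ t ≠ w := by
    by_cases hwy : w = y
    · exact ⟨x, p.end_mem_support, fun h => hx.ne (h.trans hwy)⟩
    · exact ⟨y, p.start_mem_support, fun h => hwy (h.symm)⟩
  obtain ⟨T0, hT0⟩ := exists_walk_avoid (h2 w) hvw htw
  set T := T0.bypass with hT
  have hTpath : T.IsPath := Walk.bypass_isPath _
  have hTw : w ∉ T.support := fun h => hT0 (T0.support_bypass_subset h)
  obtain ⟨z, T1, T2, hzS, hsplit, hmin⟩ := exists_prefix_hit T {r | r ∈ p.support} htp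
  have hT1path : T1.IsPath := by
    have : (T1.append T2).IsPath := hsplit ▸ hTpath
    exact this.of_append_left
  have hT1sub : ∀ r ∈ T1.support, r ∈ T.support := by
    intro r hr
    rw [← hsplit]
    exact Walk.subset_support_append_left _ _ hr
  have hT1w : w ∉ T1.support := fun h => hTw (hT1sub w h)
  have hzw : z ≠ w := fun h => hT1w (h ▸ T1.end_mem_support)
  have hzp : z ∈ p.support := hzS
  have hvT1 : v ∈ T1.support := T1.start_mem_support
  -- split p at w
  have hp1 : (p.takeUntil w hw).IsPath := hp.takeUntil hw
  have hp2 : (p.dropUntil w hw).IsPath := hp.dropUntil hw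
  have hT1e : ∀ r₁ r₂, s(r₁, r₂) ∈ T1.edges → r₁ ∈ p.support → r₂ ∈ p.support → False := by
    intro r₁ r₂ hre h1 h2
    have e1 : r₁ = z := hmin r₁ (T1.fst_mem_support_of_mem_edges hre) h1
    have e2 : r₂ = z := hmin r₂ (T1.snd_mem_support_of_mem_edges hre) h2
    have : s(r₁, r₂) ∈ G.edgeSet := T1.edges_subset_edgeSet hre
    rw [e1, e2] at this
    exact G.irrefl this
  rw [← p.take_spec hw, Walk.mem_support_append_iff] at hzp
  rcases hzp with hz1 | hz2
  · -- z on the first part p1 : y → w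
    have hwp1' : w ∉ ((p.takeUntil w hw).takeUntil z hz1).support :=
      end_not_mem_takeUntil hp1 hz1 hzw
    have hznotp2 : z ∉ (p.dropUntil w hw).support := fun h => hzw (mem_take_drop hp hw hz1 h)
    have hinner : (T1.reverse.append (Walk.cons hadj (p.dropUntil w hw))).IsPath := by
      refine IsPath.append' hT1path.reverse ?_ ?_
      · rw [Walk.cons_isPath_iff]
        exact ⟨hp2, fun h => hv (p.support_dropUntil_subset hw h)⟩
      · intro r hr hr2
        rw [Walk.support_reverse, List.mem_reverse] at hr
        rw [Walk.support_cons, List.mem_cons] at hr2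
        rcases hr2 with rfl | hr2
        · rfl
        · exact absurd ((hmin r hr (p.support_dropUntil_subset hw hr2)) ▸ hr2) hznotp2
    refine ⟨((p.takeUntil w hw).takeUntil z hz1).append
      (T1.reverse.append (Walk.cons hadj (p.dropUntil w hw))), ?_, ?_, ?_⟩
    · refine IsPath.append' (hp1.takeUntil hz1) hinner ?_
      intro r hr hrin
      have hrp : r ∈ p.support :=
        p.support_takeUntil_subset hw (((p.takeUntil w hw).support_takeUntil_subset hz1) hr)
      rw [Walk.mem_support_append_iff] at hrin
      rcases hrin with hrT | hrc
      · rw [Walk.support_reverse, List.mem_reverse] at hrT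
        exact hmin r hrT hrp
      · rw [Walk.support_cons, List.mem_cons] at hrc
        rcases hrc with rfl | hrc
        · exact absurd hrp hv
        · have : r = w := mem_take_drop hp hw
            (((p.takeUntil w hw).support_takeUntil_subset hz1) hr) hrc
          exact absurd (this ▸ hr) hwp1'
    · intro he
      rw [Walk.edges_append, List.mem_append, Walk.edges_append, List.mem_append,
        Walk.edges_cons, List.mem_cons] at he
      rcases he with he | (he | (he | he))
      · exact hpe (p.edges_takeUntil_subset hw ((p.takeUntil w hw).edges_takeUntil_subset hz1 he))
      · rw [Walk.edges_reverse, List.mem_reverse] at he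
        exact hT1e x y he p.end_mem_support p.start_mem_support
      · rw [Sym2.eq_iff] at he
        rcases he with ⟨h1, h2⟩ | ⟨h1, h2⟩
        · exact hvx h1.symm
        · exact hvy h2.symm
      · exact hpe (p.edges_dropUntil_subset hw he)
    · rw [Walk.mem_support_append_iff, Walk.mem_support_append_iff]
      refine Or.inr (Or.inl ?_)
      rw [Walk.support_reverse, List.mem_reverse]
      exact hvT1
  · -- z on the second part p2 : w → x
    have hwp2' : w ∉ ((p.dropUntil w hw).dropUntil z hz2).support :=
      start_not_mem_dropUntil hp2 hz2 hzw
    have hznotp1 : z ∉ (p.takeUntil w hw).support := fun h => hzw (mem_take_drop hp hw h hz2)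
    have hinner : ((Walk.cons hadj.symm T1).append
        ((p.dropUntil w hw).dropUntil z hz2)).IsPath := by
      refine IsPath.append' ?_ (hp2.dropUntil hz2) ?_
      · rw [Walk.cons_isPath_iff]
        exact ⟨hT1path, hT1w⟩
      · intro r hr hr2
        rw [Walk.support_cons, List.mem_cons] at hr
        have hrp2 : r ∈ p.support :=
          p.support_dropUntil_subset hw ((p.dropUntil w hw).support_dropUntil_subset hz2 hr2)
        rcases hr with rfl | hr
        · exact absurd hr2 hwp2'
        · exact hmin r hr hrp2
    refine ⟨(p.takeUntil w hw).append ((Walk.cons hadj.symm T1).append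
      ((p.dropUntil w hw).dropUntil z hz2)), ?_, ?_, ?_⟩
    · refine IsPath.append' hp1 hinner ?_
      intro r hr hrin
      have hrp : r ∈ p.support := p.support_takeUntil_subset hw hr
      rw [Walk.mem_support_append_iff] at hrin
      rcases hrin with hrc | hrd
      · rw [Walk.support_cons, List.mem_cons] at hrc
        rcases hrc with rfl | hrc
        · rfl
        · have : r = z := hmin r hrc hrp
          exact absurd (this ▸ hr) hznotp1
      · have : r = w := mem_take_drop hp hw hr
          ((p.dropUntil w hw).support_dropUntil_subset hz2 hrd)
        exact this
    · intro he
      rw [Walk.edges_append, List.mem_append, Walk.edges_append, List.mem_append,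
        Walk.edges_cons, List.mem_cons] at he
      rcases he with he | ((he | he) | he)
      · exact hpe (p.edges_takeUntil_subset hw he)
      · rw [Sym2.eq_iff] at he
        rcases he with ⟨h1, h2⟩ | ⟨h1, h2⟩
        · exact hvy h2.symm
        · exact hvx h1.symm
      · exact hT1e x y he p.end_mem_support p.start_mem_support
      · exact hpe (p.edges_dropUntil_subset hw
          ((p.dropUntil w hw).edges_dropUntil_subset hz2 he))
    · rw [Walk.mem_support_append_iff, Walk.mem_support_append_iff, Walk.support_cons,
        List.mem_cons]
      exact Or.inr (Or.inl (Or.inr hvT1))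

lemma exists_path_through [Fintype V] (hcard : 2 < Fintype.card V) (hconn : G.Connected)
    (h2 : ∀ v, (G.induce {w | w ≠ v}).Connected) {x y : V} (hx : G.Adj x y) (v : V) :
    ∃ p : G.Walk y x, p.IsPath ∧ s(x, y) ∉ p.edges ∧ v ∈ p.support := by
  suffices H : ∀ (n : ℕ) (v : V), min (G.dist x v) (G.dist y v) = n →
      ∃ p : G.Walk y x, p.IsPath ∧ s(x, y) ∉ p.edges ∧ v ∈ p.support by
    exact H _ v rfl
  intro n
  induction n using Nat.strong_induction_on with
  | _ n ih =>
    intro v hn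
    rcases Nat.eq_zero_or_pos n with rfl | hpos
    · -- v = x or v = y
      have hv : v = x ∨ v = y := by
        rcases Nat.min_eq_zero_iff.mp hn with h0 | h0
        · exact Or.inl ((hconn.dist_eq_zero_iff.mp h0).symm)
        · exact Or.inr ((hconn.dist_eq_zero_iff.mp h0).symm)
      obtain ⟨p, hp, hpe⟩ := exists_base_path hcard h2 hx
      rcases hv with rfl | rfl
      · exact ⟨p, hp, hpe, p.end_mem_support⟩
      · exact ⟨p, hp, hpe, p.start_mem_support⟩
    · -- find neighbor w of v closer to {x, y}
      obtain ⟨t, ht, htn⟩ : ∃ t, (t = x ∨ t = y) ∧ G.dist t v = n := by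
        rcases min_cases (G.dist x v) (G.dist y v) with ⟨h1, _⟩ | ⟨h1, _⟩
        · exact ⟨x, Or.inl rfl, by rw [← hn, h1]⟩
        · exact ⟨y, Or.inr rfl, by rw [← hn, h1]⟩
      obtain ⟨W, hW⟩ := hconn.exists_walk_length_eq_dist v t
      have hWlen : W.length = n := by rw [hW, dist_comm, htn]
      obtain ⟨w, hadj, W', hWeq⟩ := closed_cons' W (by omega)
      have hW'len : W'.length = n - 1 := by
        rw [hWeq] at hWlen
        simp only [Walk.length_cons] at hWlen
        omega
      have hdist : min (G.dist x w) (G.dist y w) ≤ n - 1 := by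
        have htw : G.dist t w ≤ n - 1 := by
          have := dist_le W'.reverse
          rwa [Walk.length_reverse, hW'len] at this
        rcases ht with rfl | rfl
        · exact le_trans (min_le_left _ _) htw
        · exact le_trans (min_le_right _ _) htw
      obtain ⟨p, hp, hpe, hwp⟩ := ih (min (G.dist x w) (G.dist y w)) (by omega) w rfl
      by_cases hvp : v ∈ p.support
      · exact ⟨p, hp, hpe, hvp⟩
      · obtain ⟨q, hq, hqe, hvq⟩ := splice h2 hx p hp hpe hwp hvp hadj
        exact ⟨q, hq, hqe, hvq⟩

lemma append_path_inter {a b c : V} {p : G.Walk a b} {q : G.Walk b c}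
    (h : (p.append q).IsPath) : ∀ r ∈ p.support, r ∈ q.support → r = b := by
  intro r hrp hrq
  have hnd : (p.support ++ q.support.tail).Nodup := by
    have := Walk.isPath_def _ |>.mp h
    rwa [Walk.support_append] at this
  rw [q.support_eq_cons, List.mem_cons] at hrq
  rcases hrq with hrq | hrq
  · exact hrq
  · exact absurd hrp (fun hrp => (List.disjoint_of_nodup_append hnd) hrp hrq)

lemma edges_subset_of_append_left {a b c : V} {p : G.Walk a b} {q : G.Walk b c}
    {T : G.Walk a c} (h : p.append q = T) : ∀ f ∈ p.edges, f ∈ T.edges := by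
  intro f hf
  rw [← h, Walk.edges_append, List.mem_append]
  exact Or.inl hf

lemma edges_subset_of_append_right {a b c : V} {p : G.Walk a b} {q : G.Walk b c}
    {T : G.Walk a c} (h : p.append q = T) : ∀ f ∈ q.edges, f ∈ T.edges := by
  intro f hf
  rw [← h, Walk.edges_append, List.mem_append]
  exact Or.inr hf

lemma support_subset_of_append_left {a b c : V} {p : G.Walk a b} {q : G.Walk b c}
    {T : G.Walk a c} (h : p.append q = T) : ∀ r ∈ p.support, r ∈ T.support := by
  intro r hr
  rw [← h]
  exact Walk.subset_support_append_left _ _ hr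

lemma support_subset_of_append_right {a b c : V} {p : G.Walk a b} {q : G.Walk b c}
    {T : G.Walk a c} (h : p.append q = T) : ∀ r ∈ q.support, r ∈ T.support := by
  intro r hr
  rw [← h]
  exact Walk.subset_support_append_right _ _ hr

lemma not_edge_mem {x y z s t : V} {W : G.Walk s t} (hxy : x ≠ y) (S : V → Prop)
    (hmin : ∀ r ∈ W.support, S r → r = z) (hxS : S x) (hyS : S y) : s(x, y) ∉ W.edges := by
  intro he
  exact hxy ((hmin x (W.fst_mem_support_of_mem_edges he) hxS).trans
    (hmin y (W.snd_mem_support_of_mem_edges he) hyS).symm)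

lemma key_case2 {x y c : V} (h2 : ∀ v, (G.induce {w | w ≠ v}).Connected)
    (hx : G.Adj x y) {C : G.Walk c c} (hnd : C.support.tail.Nodup) (hodd : Odd C.length)
    (hCe : s(x, y) ∉ C.edges) (hxC : x ∈ C.support) :
    ∃ p : G.Walk y x, p.IsPath ∧ Odd p.length ∧ s(x, y) ∉ p.edges := by
  have hlen1 : C.length ≠ 1 := closed_length_ne_one C
  have hlenpos : 0 < C.length := by rcases hodd with ⟨m, hm⟩; omega
  obtain ⟨c₀, hc₀C, hc₀x⟩ := exists_other_support hnd (by omega) x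
  have hyx : y ≠ x := hx.ne'
  obtain ⟨W0, hW0⟩ := exists_walk_avoid (h2 x) hyx hc₀x
  have hTpath : W0.bypass.IsPath := Walk.bypass_isPath _
  have hTx : x ∉ W0.bypass.support := fun h => hW0 (W0.support_bypass_subset h)
  obtain ⟨b, T1, T2, hbC, hsplit, hmin⟩ :=
    exists_prefix_hit W0.bypass {r | r ∈ C.support} hc₀C
  have hT1path : T1.IsPath := by
    have : (T1.append T2).IsPath := hsplit ▸ hTpath
    exact this.of_append_left
  have hT1x : x ∉ T1.support := fun h => hTx (support_subset_of_append_left hsplit x h)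
  have hbx : b ≠ x := fun h => hT1x (h ▸ T1.end_mem_support)
  obtain ⟨A, hApath, hAodd, hAsub, hAe⟩ := arc_parity hnd hodd hbC hxC hbx T1.length
  refine ⟨T1.append A, ?_, ?_, ?_⟩
  · refine IsPath.append' hT1path hApath ?_
    intro r hr hrA
    exact hmin r hr (hAsub r hrA)
  · rw [Walk.length_append]
    rcases hAodd with ⟨m, hm⟩
    exact ⟨m, by omega⟩
  · intro he
    rw [Walk.edges_append, List.mem_append] at he
    rcases he with he | he
    · exact hT1x (T1.fst_mem_support_of_mem_edges he)
    · exact hCe (hAe _ he)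

lemma key_case3 [Fintype V] {x y c : V} (hcard : 2 < Fintype.card V) (hconn : G.Connected)
    (h2 : ∀ v, (G.induce {w | w ≠ v}).Connected)
    (hx : G.Adj x y) {C : G.Walk c c} (hnd : C.support.tail.Nodup) (hodd : Odd C.length)
    (hCe : s(x, y) ∉ C.edges)(hxC : x ∉ C.support) :
    ∃ p : G.Walk y x, p.IsPath ∧ Odd p.length ∧ s(x, y) ∉ p.edges := by
  have hlen1 : C.length ≠ 1 := closed_length_ne_one C
  have hlenpos : 0 < C.length := by rcases hodd with ⟨m, hm⟩; omega
  -- a path R from y to x through a vertex of C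
  obtain ⟨R, hRpath, hRe, hcR⟩ := exists_path_through hcard hconn h2 hx c
  have hcCmem : c ∈ C.support := C.start_mem_support
  -- first C-hit from the y side
  obtain ⟨a, Ry, T2, haC, hsplit1, hminRy⟩ :=
    exists_prefix_hit (R.takeUntil c hcR) {r | r ∈ C.support} hcCmem
  set SS : G.Walk a x := T2.append (R.dropUntil c hcR) with hSSdef
  have hRa : Ry.append SS = R := by
    rw [hSSdef, Walk.append_assoc, hsplit1, R.take_spec hcR]
  have hRapath : (Ry.append SS).IsPath := hRa ▸ hRpath
  have hRypath : Ry.IsPath := hRapath.of_append_left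
  have hSSpath : SS.IsPath := hRapath.of_append_right
  have hRySS : ∀ r ∈ Ry.support, r ∈ SS.support → r = a := append_path_inter hRapath
  have hRysub : ∀ r ∈ Ry.support, r ∈ R.support := support_subset_of_append_left hRa
  have hSSsub : ∀ r ∈ SS.support, r ∈ R.support := support_subset_of_append_right hRa
  have hRyedges : ∀ f ∈ Ry.edges, f ∈ R.edges := edges_subset_of_append_left hRa
  have hSSedges : ∀ f ∈ SS.edges, f ∈ R.edges := edges_subset_of_append_right hRa
  -- first C-hit from the x side
  obtain ⟨b, Rx, T2x, hbC, hsplit2, hminRx⟩ :=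
    exists_prefix_hit SS.reverse {r | r ∈ C.support} (by simpa using haC)
  have hRxpath : Rx.IsPath := by
    have : (Rx.append T2x).IsPath := hsplit2 ▸ hSSpath.reverse
    exact this.of_append_left
  have hRxsubSS : ∀ r ∈ Rx.support, r ∈ SS.support := by
    intro r hr
    have := support_subset_of_append_left hsplit2 r hr
    rwa [Walk.support_reverse, List.mem_reverse] at this
  have hRxedgesSS : ∀ f ∈ Rx.edges, f ∈ SS.edges := by
    intro f hf
    have := edges_subset_of_append_left hsplit2 f hf
    rwa [Walk.edges_reverse, List.mem_reverse] at this
  by_cases hab : b = a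
  · -- single contact point a : use the two-disjoint-path construction
    subst hab
    have hT2xnil : T2x.support = [b] := by
      have hT2xpath : T2x.IsPath := by
        have : (Rx.append T2x).IsPath := hsplit2 ▸ hSSpath.reverse
        exact this.of_append_right
      have : T2x = Walk.nil := by
        cases T2x with
        | nil => rfl
        | cons h q =>
          exfalso
          rw [Walk.cons_isPath_iff] at hT2xpath
          exact hT2xpath.2 q.end_mem_support
      rw [this, Walk.support_nil]
    have hRC : ∀ r ∈ R.support, r ∈ C.support → r = b := by
      intro r hr hrC
      rw [← hRa, Walk.mem_support_append_iff] at hr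
      rcases hr with hr | hr
      · exact hminRy r hr hrC
      · rw [← List.mem_reverse, ← Walk.support_reverse, ← hsplit2,
          Walk.mem_support_append_iff] at hr
        rcases hr with hr | hr
        · exact hminRx r hr hrC
        · rw [hT2xnil] at hr
          simpa using hr
    -- pick another vertex of C
    obtain ⟨c', hc'C, hc'b⟩ := exists_other_support hnd (by omega) b
    have hxb : x ≠ b := fun h => hxC (h ▸ hbC)
    obtain ⟨W1, hW1⟩ := exists_walk_avoid (h2 b) hxb hc'b
    have hTbpath : W1.bypass.IsPath := Walk.bypass_isPath _
    have hTbb : b ∉ W1.bypass.support := fun h => hW1 (W1.support_bypass_subset h)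
    obtain ⟨b₂, T1, T1r, hb₂C, hsplit3, hminT1⟩ :=
      exists_prefix_hit W1.bypass {r | r ∈ C.support} hc'C
    have hT1path : T1.IsPath := by
      have : (T1.append T1r).IsPath := hsplit3 ▸ hTbpath
      exact this.of_append_left
    have hT1b : b ∉ T1.support := fun h => hTbb (support_subset_of_append_left hsplit3 b h)
    have hb₂b : b₂ ≠ b := fun h => hT1b (h ▸ T1.end_mem_support)
    -- last R-hit along T1, from the b₂ end
    obtain ⟨z, T2r, T3r, hzR, hsplit4, hminz⟩ :=
      exists_prefix_hit T1.reverse {r | r ∈ R.support} (by simpa using R.end_mem_support)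
    have hT2rpath : T2r.IsPath := by
      have : (T2r.append T3r).IsPath := hsplit4 ▸ hT1path.reverse
      exact this.of_append_left
    have hT2rsubT1 : ∀ r ∈ T2r.support, r ∈ T1.support := by
      intro r hr
      have := support_subset_of_append_left hsplit4 r hr
      rwa [Walk.support_reverse, List.mem_reverse] at this
    have hT2rC : ∀ r ∈ T2r.support, r ∈ C.support → r = b₂ := fun r hr =>
      hminT1 r (hT2rsubT1 r hr)
    have hT2rb : b ∉ T2r.support := fun h => hT1b (hT2rsubT1 b h)
    have hzb : z ≠ b := fun h => hT2rb (h ▸ T2r.end_mem_support)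
    have hT2redges : ∀ f ∈ T2r.edges, f ∈ T1.edges := by
      intro f hf
      have := edges_subset_of_append_left hsplit4 f hf
      rwa [Walk.edges_reverse, List.mem_reverse] at this
    have hT1exy : s(x, y) ∉ T2r.edges :=
      not_edge_mem hx.ne (fun r => r ∈ R.support) hminz R.end_mem_support R.start_mem_support
    have hzRmem : z ∈ R.support := hzR
    have hzcases : z ∈ Ry.support ∨ z ∈ SS.support := by
      have h' := hzRmem
      rw [← hRa, Walk.mem_support_append_iff] at h'
      exact h'
    rcases hzcases with hzRy | hzSS
    · -- z lies on Ry : p = Ry[y..z] ++ T2r.reverse ++ A(b₂ → b) ++ SS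
      obtain ⟨A, hApath, hAodd, hAsub, hAe⟩ := arc_parity hnd hodd hb₂C hbC hb₂b
        ((Ry.takeUntil z hzRy).length + T2r.length + SS.length)
      have hzb2 : z ≠ b₂ := by
        intro h
        have : b₂ ∈ R.support := h ▸ hzRmem
        exact hb₂b (hRC b₂ this hb₂C)
      have hbnotRy' : b ∉ (Ry.takeUntil z hzRy).support := by
        have hend := end_not_mem_takeUntil hRypath hzRy hzb
        exact hend
      have hi1 : (A.append SS).IsPath := by
        refine IsPath.append' hApath hSSpath ?_
        intro r hrA hrSS
        exact hRC r (hSSsub r hrSS) (hAsub r hrA)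
      have hi2 : (T2r.reverse.append (A.append SS)).IsPath := by
        refine IsPath.append' hT2rpath.reverse hi1 ?_
        intro r hr hrin
        rw [Walk.support_reverse, List.mem_reverse] at hr
        rw [Walk.mem_support_append_iff] at hrin
        rcases hrin with hrA | hrSS
        · exact hT2rC r hr (hAsub r hrA)
        · have : r = z := hminz r hr (hSSsub r hrSS)
          subst this
          exact absurd (hRySS r hzRy hrSS) hzb
      refine ⟨(Ry.takeUntil z hzRy).append (T2r.reverse.append (A.append SS)), ?_, ?_, ?_⟩
      · refine IsPath.append' (hRypath.takeUntil hzRy) hi2 ?_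
        intro r hr hrin
        have hrRy : r ∈ Ry.support := Ry.support_takeUntil_subset hzRy hr
        rw [Walk.mem_support_append_iff] at hrin
        rcases hrin with hrT | hrin
        · rw [Walk.support_reverse, List.mem_reverse] at hrT
          exact hminz r hrT (hRysub r hrRy)
        · rw [Walk.mem_support_append_iff] at hrin
          rcases hrin with hrA | hrSS
          · have : r = b := hRC r (hRysub r hrRy) (hAsub r hrA)
            exact absurd (this ▸ hr) hbnotRy'
          · have : r = b := hRySS r hrRy hrSS
            exact absurd (this ▸ hr) hbnotRy'
      · rw [Walk.length_append, Walk.length_append, Walk.length_append, Walk.length_reverse]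
        rcases hAodd with ⟨m, hm⟩
        exact ⟨m, by omega⟩
      · intro he
        rw [Walk.edges_append, List.mem_append, Walk.edges_append, List.mem_append,
          Walk.edges_append, List.mem_append] at he
        rcases he with he | (he | (he | he))
        · exact hRe (hRyedges _ (Ry.edges_takeUntil_subset hzRy he))
        · rw [Walk.edges_reverse, List.mem_reverse] at he
          exact hT1exy he
        · exact hCe (hAe _ he)
        · exact hRe (hSSedges _ he)
    · -- z lies on SS : p = Ry ++ A(b → b₂) ++ T2r ++ SS[z..x]
      obtain ⟨A, hApath, hAodd, hAsub, hAe⟩ := arc_parity hnd hodd hbC hb₂C (Ne.symm hb₂b)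
        (Ry.length + T2r.length + (SS.dropUntil z hzSS).length)
      have hbSSdrop : b ∉ (SS.dropUntil z hzSS).support :=
        start_not_mem_dropUntil hSSpath hzSS hzb
      have hi1 : (T2r.append (SS.dropUntil z hzSS)).IsPath := by
        refine IsPath.append' hT2rpath (hSSpath.dropUntil hzSS) ?_
        intro r hr hr2
        exact hminz r hr (hSSsub r (SS.support_dropUntil_subset hzSS hr2))
      have hi2 : (A.append (T2r.append (SS.dropUntil z hzSS))).IsPath := by
        refine IsPath.append' hApath hi1 ?_
        intro r hrA hrin
        rw [Walk.mem_support_append_iff] at hrin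
        rcases hrin with hrT | hrS
        · exact hT2rC r hrT (hAsub r hrA)
        · have : r = b := hRC r (hSSsub r (SS.support_dropUntil_subset hzSS hrS)) (hAsub r hrA)
          exact absurd (this ▸ hrS) hbSSdrop
      refine ⟨Ry.append (A.append (T2r.append (SS.dropUntil z hzSS))), ?_, ?_, ?_⟩
      · refine IsPath.append' hRypath hi2 ?_
        intro r hrRy hrin
        rw [Walk.mem_support_append_iff] at hrin
        rcases hrin with hrA | hrin
        · exact hminRy r hrRy (hAsub r hrA)
        · rw [Walk.mem_support_append_iff] at hrin
          rcases hrin with hrT | hrS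
          · have hrz : r = z := hminz r hrT (hRysub r hrRy)
            subst hrz
            exact absurd (hRySS r hrRy hzSS) hzb
          · exact hRySS r hrRy (SS.support_dropUntil_subset hzSS hrS)
      · rw [Walk.length_append, Walk.length_append, Walk.length_append]
        rcases hAodd with ⟨m, hm⟩
        exact ⟨m, by omega⟩
      · intro he
        rw [Walk.edges_append, List.mem_append, Walk.edges_append, List.mem_append,
          Walk.edges_append, List.mem_append] at he
        rcases he with he | (he | (he | he))
        · exact hRe (hRyedges _ he)
        · exact hCe (hAe _ he)
        · exact hT1exy he
        · exact hRe (hSSedges _ (SS.edges_dropUntil_subset hzSS he))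
  · -- two distinct contact points a ≠ b : direct construction
    obtain ⟨A, hApath, hAodd, hAsub, hAe⟩ := arc_parity hnd hodd haC hbC
      (fun h => hab h.symm) (Ry.length + Rx.length)
    have hi1 : (A.append Rx.reverse).IsPath := by
      refine IsPath.append' hApath hRxpath.reverse ?_
      intro r hrA hrR
      rw [Walk.support_reverse, List.mem_reverse] at hrR
      exact hminRx r hrR (hAsub r hrA)
    refine ⟨Ry.append (A.append Rx.reverse), ?_, ?_, ?_⟩
    · refine IsPath.append' hRypath hi1 ?_
      intro r hrRy hrin
      rw [Walk.mem_support_append_iff] at hrin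
      rcases hrin with hrA | hrR
      · exact hminRy r hrRy (hAsub r hrA)
      · rw [Walk.support_reverse, List.mem_reverse] at hrR
        exact hRySS r hrRy (hRxsubSS r hrR)
    · rw [Walk.length_append, Walk.length_append, Walk.length_reverse]
      rcases hAodd with ⟨m, hm⟩
      exact ⟨m, by omega⟩
    · intro he
      rw [Walk.edges_append, List.mem_append, Walk.edges_append, List.mem_append] at he
      rcases he with he | (he | he)
      · exact hRe (hRyedges _ he)
      · exact hCe (hAe _ he)
      · rw [Walk.edges_reverse, List.mem_reverse] at he
        exact hRe (hSSedges _ (hRxedgesSS _ he))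

lemma key [Fintype V] {x y c : V} (hcard : 2 < Fintype.card V) (hconn : G.Connected)
    (h2 : ∀ v, (G.induce {w | w ≠ v}).Connected) (hx : G.Adj x y) {C : G.Walk c c}
    (hnd : C.support.tail.Nodup) (hodd : Odd C.length) (hCe : s(x, y) ∉ C.edges) :
    ∃ p : G.Walk y x, p.IsPath ∧ Odd p.length ∧ s(x, y) ∉ p.edges := by
  by_cases hxC : x ∈ C.support
  · exact key_case2 h2 hx hnd hodd hCe hxC
  · by_cases hyC : y ∈ C.support
    · obtain ⟨p', hp', hodd', hpe'⟩ := key_case2 h2 hx.symm hnd hodd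
        (by rwa [Sym2.eq_swap]) hyC
      refine ⟨p'.reverse, hp'.reverse, by rwa [Walk.length_reverse], ?_⟩
      rw [Walk.edges_reverse, List.mem_reverse, Sym2.eq_swap]
      exact hpe'
    · exact key_case3 hcard hconn h2 hx hnd hodd hCe hxC

end SimpleGraph

open SimpleGraph

/-- If `G` is 2-connected and deleting any edge leaves a non-bipartite graph,
then every edge of `G` is contained in an even cycle. -/
theorem stmt_1 {V : Type*} [Fintype V] (G : SimpleGraph V) (hG : TwoConnected G)
    (hbip : ∀ e ∈ G.edgeSet, ¬ (G.deleteEdges {e}).Colorable 2) :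
    ∀ e ∈ G.edgeSet, ∃ (b : V) (D : G.Walk b b),
      D.IsCycle ∧ Even D.length ∧ e ∈ D.edges := by
  classical
  obtain ⟨hcard, hconn, h2⟩ := hG
  intro e he
  induction e using Sym2.ind with
  | _ x y =>
    have hx : G.Adj x y := (G.mem_edgeSet).mp he
    have hnb := hbip _ he
    obtain ⟨c0, w0, hw0⟩ := exists_odd_closed hnb
    obtain ⟨c, CH, hndH, hoddH⟩ := tight_aux _ c0 w0 rfl hw0
    have hCHsub : ∀ f ∈ CH.edges, f ∈ G.edgeSet := by
      intro f hf
      have hfH := CH.edges_subset_edgeSet hf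
      rw [edgeSet_deleteEdges] at hfH
      exact hfH.1
    set C : G.Walk c c := CH.transfer G hCHsub with hCdef
    have hnd : C.support.tail.Nodup := by
      rw [hCdef, Walk.support_transfer]
      exact hndH
    have hodd : Odd C.length := by
      rw [hCdef, Walk.length_transfer]
      exact hoddH
    have hCe : s(x, y) ∉ C.edges := by
      rw [hCdef, Walk.edges_transfer]
      intro hf
      have hfH := CH.edges_subset_edgeSet hf
      rw [edgeSet_deleteEdges] at hfH
      exact hfH.2 rfl
    obtain ⟨p, hp, hpodd, hpe⟩ := key hcard hconn h2 hx hnd hodd hCe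
    refine ⟨x, Walk.cons hx p, ?_, ?_, ?_⟩
    · exact (Walk.cons_isCycle_iff p hx).mpr ⟨hp, hpe⟩
    · rw [Walk.length_cons]
      rcases hpodd with ⟨m, hm⟩
      exact ⟨m + 1, by omega⟩
    · rw [Walk.edges_cons]
      exact List.mem_cons_self
end

section
/- Let G be a 2-connected simple graph that is not bipartite. Then every edge of G is contained in a cycle of odd length. -/
open SimpleGraph

namespace TwoConnectedAux

open SimpleGraph.Walk

variable {V : Type*} {G : SimpleGraph V}

/-- A path from `b` to `a` containing the edge `s(a,b)` has length 1. -/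
private lemma path_edge_endpoints {a b : V} {P : G.Walk b a} (hP : P.IsPath)
    (he : s(a, b) ∈ P.edges) : P.length = 1 := by
  cases P with
  | nil => simp at he
  | @cons _ c _ h R =>
    rw [edges_cons, List.mem_cons] at he
    rcases he with he | he
    · have hac : a = c := by
        rw [Sym2.eq_iff] at he
        rcases he with ⟨h1, h2⟩ | ⟨h1, h2⟩
        · exact h1.trans h2
        · exact h1
      subst hac
      cases R with
      | nil => simp
      | cons h2 S =>
        exfalso
        have hR : (Walk.cons h2 S).IsPath := hP.of_cons
        rw [cons_isPath_iff] at hR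
        exact hR.2 (S.end_mem_support)
    · exfalso
      rw [cons_isPath_iff] at hP
      exact hP.2 (R.snd_mem_support_of_mem_edges he)

/-- A closed path is trivial. -/
private lemma closed_path_length {a : V} {P : G.Walk a a} (hP : P.IsPath) :
    P.length = 0 := by
  cases P with
  | nil => simp
  | cons h S =>
    exfalso
    rw [cons_isPath_iff] at hP
    exact hP.2 (S.end_mem_support)

/-- In a connected graph that is not 2-colorable there is a closed walk of odd
length. -/
private lemma exists_odd_closed_walk (hc : G.Connected) (hb : ¬ G.Colorable 2) :
    ∃ (a : V) (W : G.Walk a a), Odd W.length := by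
  by_contra h
  push_neg at h
  simp only [Nat.not_odd_iff_even] at h
  apply hb
  have : Nonempty V := hc.nonempty
  obtain ⟨r⟩ := this
  have w : ∀ x : V, G.Walk r x := fun x => (hc.preconnected r x).some
  refine ⟨SimpleGraph.Coloring.mk
    (fun x => (⟨(w x).length % 2, Nat.mod_lt _ (by norm_num)⟩ : Fin 2)) ?_⟩
  intro x y hadj heq
  have hmod : (w x).length % 2 = (w y).length % 2 := by
    simpa using congrArg Fin.val heq
  have hW := h r ((w x).append (Walk.cons hadj (w y).reverse))
  rw [Nat.even_iff] at hW
  rw [length_append, length_cons, length_reverse] at hW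
  omega

/-- From an odd closed walk we can extract an odd cycle. -/
private lemma exists_odd_cycle_of_walk [DecidableEq V] :
    ∀ n {a : V} (W : G.Walk a a), W.length = n → Odd n →
      ∃ (b : V) (C : G.Walk b b), C.IsCycle ∧ Odd C.length := by
  intro n
  induction n using Nat.strong_induction_on with
  | _ n ih =>
    intro a W hlen hodd
    by_cases hdup : ∃ w, 2 ≤ W.support.tail.count w
    · obtain ⟨w, hw2⟩ := hdup
      have hwmem : w ∈ W.support := by
        apply List.mem_of_mem_tail
        rw [← List.count_pos_iff]
        omega
      have hlen' : (W.rotate w hwmem).length = n := by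
        have hperm : (W.rotate w hwmem).edges.length = W.edges.length :=
          (W.rotate_edges w hwmem).perm.length_eq
        rwa [length_edges, length_edges, hlen] at hperm
      have hcnt : 2 ≤ (W.rotate w hwmem).support.tail.count w := by
        rwa [(W.support_rotate w hwmem).perm.count_eq]
      revert hlen' hcnt
      generalize W.rotate w hwmem = W'
      intro hlen' hcnt
      cases W' with
      | nil =>
        exfalso
        simp only [length_nil] at hlen'
        rw [Nat.odd_iff] at hodd
        omega

      | @cons _ x _ h Q =>
        rw [support_cons, List.tail_cons] at hcnt
        have hwQ : w ∈ Q.support := by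
          rw [← List.count_pos_iff]; omega
        have hspec := Q.take_spec hwQ
        have hlens : (Q.takeUntil w hwQ).length + (Q.dropUntil w hwQ).length
            = Q.length := by
          have := congrArg Walk.length hspec
          rwa [length_append] at this
        have hcnt1 := Q.count_support_takeUntil_eq_one hwQ
        have hBpos : 1 ≤ (Q.dropUntil w hwQ).length := by
          have hsupp : Q.support
              = (Q.takeUntil w hwQ).support ++ (Q.dropUntil w hwQ).support.tail := by
            rw [← support_append, hspec]
          have hcntB : 1 ≤ (Q.dropUntil w hwQ).support.tail.count w := by
            rw [hsupp, List.count_append, hcnt1] at hcnt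
            omega
          have h1 : (Q.dropUntil w hwQ).support.tail.count w
              ≤ (Q.dropUntil w hwQ).support.tail.length := List.count_le_length
          have h2 : (Q.dropUntil w hwQ).support.length
              = (Q.dropUntil w hwQ).length + 1 := length_support _
          have h3 : (Q.dropUntil w hwQ).support.tail.length
              = (Q.dropUntil w hwQ).support.length - 1 := List.length_tail
          omega
        have hQlen : Q.length + 1 = n := by
          simpa using hlen'
        have hsplit : (Walk.cons h (Q.takeUntil w hwQ)).length
            + (Q.dropUntil w hwQ).length = n := by
          rw [length_cons]
          omega
        have hparity : Odd (Walk.cons h (Q.takeUntil w hwQ)).length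
            ∨ Odd (Q.dropUntil w hwQ).length := by
          rw [Nat.odd_iff] at hodd ⊢
          rw [Nat.odd_iff]
          omega
        rcases hparity with hp | hp
        · exact ih _ (by omega) (Walk.cons h (Q.takeUntil w hwQ)) rfl hp
        · exact ih _ (by omega) (Q.dropUntil w hwQ) rfl hp
    · push_neg at hdup
      have hnodup : W.support.tail.Nodup := by
        rw [List.nodup_iff_count_le_one]
        intro w
        have := hdup w
        omega
      cases W with
      | nil =>
        exfalso
        rw [← hlen] at hodd
        simp [Nat.odd_iff] at hodd
      | @cons _ b _ h Q =>
        rw [support_cons, List.tail_cons] at hnodup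
        have hQpath : Q.IsPath := IsPath.mk' hnodup
        refine ⟨a, Walk.cons h Q, ?_, by rw [hlen]; exact hodd⟩
        rw [cons_isCycle_iff]
        refine ⟨hQpath, fun hmem => ?_⟩
        have h1 := path_edge_endpoints hQpath hmem
        rw [← hlen] at hodd
        rw [length_cons, h1] at hodd
        simp [Nat.odd_iff] at hodd

/-- From any walk ending in `S` we can extract a walk meeting `S` only at its
final vertex. -/
private lemma exists_walk_until (S : Set V) :
    ∀ {v x : V} (R : G.Walk v x), x ∈ S →
      ∃ (w : V) (P : G.Walk v w), w ∈ S ∧ (∀ y ∈ P.support, y ∈ R.support) ∧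
        ∀ y ∈ P.support, y ∈ S → y = w := by
  intro v x R
  induction R with
  | nil =>
    intro hx
    exact ⟨_, Walk.nil, hx, fun y hy => hy, fun y hy _ => by simpa using hy⟩
  | @cons u q x h R ih =>
    intro hx
    by_cases hu : u ∈ S
    · refine ⟨u, Walk.nil, hu, ?_, ?_⟩
      · intro y hy
        simp only [support_nil, List.mem_singleton] at hy
        subst hy
        exact start_mem_support _
      · intro y hy _
        simpa using hy
    · obtain ⟨w, P, h1, h2, h3⟩ := ih hx
      refine ⟨w, Walk.cons h P, h1, ?_, ?_⟩
      · intro y hy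
        rw [support_cons, List.mem_cons] at hy ⊢
        rcases hy with hy | hy
        · exact Or.inl hy
        · exact Or.inr (h2 y hy)
      · intro y hy hyS
        rw [support_cons, List.mem_cons] at hy
        rcases hy with rfl | hy
        · exact absurd hyS hu
        · exact h3 y hy hyS

/-- Assemble a cycle through the edge `s(u,v)` from a path `P : v → w` avoiding
`u` and a path `AR : w → u` meeting `P` only in `w`, with the right parity. -/
private lemma build_cycle {u v w : V} (hadj : G.Adj u v)
    (P : G.Walk v w) (hP : P.IsPath) (hPu : ∀ y ∈ P.support, y ≠ u)
    (AR : G.Walk w u) (hAR : AR.IsPath)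
    (hdisj : ∀ y ∈ P.support, y ∈ AR.support → y = w)
    (hpar : Even (P.length + AR.length)) :
    ∃ (b : V) (D : G.Walk b b), D.IsCycle ∧ Odd D.length ∧ s(u, v) ∈ D.edges := by
  have hPA : (P.append AR).IsPath := by
    rw [isPath_def, support_append]
    apply List.Nodup.append hP.support_nodup
      ((AR.support.tail_sublist).nodup hAR.support_nodup)
    intro y hyP hyT
    have hyA : y ∈ AR.support := List.mem_of_mem_tail hyT
    have hyw : y = w := hdisj y hyP hyA
    have hnd := hAR.support_nodup
    rw [AR.support_eq_cons, List.nodup_cons] at hnd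
    exact hnd.1 (hyw ▸ hyT)
  have hnotmem : s(u, v) ∉ (P.append AR).edges := by
    rw [edges_append, List.mem_append]
    rintro (hm | hm)
    · exact hPu u (P.fst_mem_support_of_mem_edges hm) rfl
    · have hv : v ∈ AR.support := AR.snd_mem_support_of_mem_edges hm
      have hvw : v = w := hdisj v (P.start_mem_support) hv
      subst hvw
      have h1 : AR.length = 1 := path_edge_endpoints hAR hm
      have h0 : P.length = 0 := closed_path_length hP
      rw [h0, h1] at hpar
      simp at hpar
  refine ⟨u, Walk.cons hadj (P.append AR), ?_, ?_, ?_⟩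
  · rw [cons_isCycle_iff]
    exact ⟨hPA, hnotmem⟩
  · rw [length_cons, length_append]
    rcases hpar with ⟨k, hk⟩
    exact ⟨k, by omega⟩
  · rw [edges_cons]
    exact List.mem_cons_self

/-- If `u` lies on an odd cycle, `u` is adjacent to `v`, and `G - u` is
connected, then the edge `s(u,v)` lies on an odd cycle. -/
private lemma edge_in_odd_cycle_of_mem [DecidableEq V] {u v c : V}
    (C : G.Walk c c) (hC : C.IsCycle) (hodd : Odd C.length) (huC : u ∈ C.support)
    (hadj : G.Adj u v)
    (hdel : (G.induce {x | x ≠ u}).Connected) :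
    ∃ (b : V) (D : G.Walk b b), D.IsCycle ∧ Odd D.length ∧ s(u, v) ∈ D.edges := by
  have hC' : (C.rotate u huC).IsCycle := hC.rotate huC
  have hodd' : Odd (C.rotate u huC).length := by
    have hperm : (C.rotate u huC).edges.length = C.edges.length :=
      (C.rotate_edges u huC).perm.length_eq
    rw [length_edges, length_edges] at hperm
    rwa [hperm]
  revert hC' hodd'
  generalize C.rotate u huC = C'
  intro hC' hodd'
  cases C' with
  | nil => exact absurd rfl hC'.ne_nil
  | @cons _ x _ h Q =>
    rw [cons_isCycle_iff] at hC'
    obtain ⟨hQpath, -⟩ := hC'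
    have hQeven : Even Q.length := by
      rw [length_cons, Nat.odd_iff, Nat.even_iff] at *
      omega
    -- walk from v to x in G - u
    have hvne : v ≠ u := hadj.ne'
    have hxne : x ≠ u := h.ne'
    let f : G.induce {y | y ≠ u} →g G := ⟨Subtype.val, fun {a b} hab => hab⟩
    obtain ⟨W0⟩ := hdel.preconnected ⟨v, hvne⟩ ⟨x, hxne⟩
    have hRsupp : ∀ y ∈ (W0.map f).support, y ≠ u := by
      intro y hy
      rw [Walk.support_map, List.mem_map] at hy
      obtain ⟨z, _, rfl⟩ := hy
      exact z.2
    -- first hit of Q.support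
    obtain ⟨w, P0, hwS, hsub, honly⟩ :=
      exists_walk_until {y | y ∈ Q.support} (W0.map f) (Q.start_mem_support)
    set P := P0.bypass with hPdef
    have hP : P.IsPath := P0.bypass_isPath
    have hPsub : ∀ y ∈ P.support, y ∈ P0.support := fun y hy =>
      P0.support_bypass_subset hy
    have hPu : ∀ y ∈ P.support, y ≠ u := fun y hy =>
      hRsupp y (hsub y (hPsub y hy))
    have honly' : ∀ y ∈ P.support, y ∈ Q.support → y = w := fun y hy hyQ =>
      honly y (hPsub y hy) hyQ
    have hwQ : w ∈ Q.support := hwS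
    have hwne : w ≠ u := hPu w (P.end_mem_support)
    -- arcs
    set B1 := Q.takeUntil w hwQ with hB1def
    set B2 := Q.dropUntil w hwQ with hB2def
    have hB1path : B1.IsPath := hQpath.takeUntil hwQ
    have hB2path : B2.IsPath := hQpath.dropUntil hwQ
    have hlens : B1.length + B2.length = Q.length := by
      have := congrArg Walk.length (Q.take_spec hwQ)
      rwa [length_append] at this
    have hsuppQ : Q.support = B1.support ++ B2.support.tail := by
      rw [← support_append, Q.take_spec hwQ]
    have huB2tail : u ∈ B2.support.tail := by
      have hu2 : u ∈ B2.support := B2.end_mem_support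
      have : B2.support = w :: B2.support.tail := B2.support_eq_cons
      rw [this, List.mem_cons] at hu2
      rcases hu2 with hu2 | hu2
      · exact absurd hu2.symm hwne
      · exact hu2
    have huB1 : u ∉ B1.support := by
      intro hu1
      have hnd := hQpath.support_nodup
      rw [hsuppQ] at hnd
      exact (List.disjoint_of_nodup_append hnd) hu1 huB2tail
    have hconsB1 : (Walk.cons h B1).IsPath := hB1path.cons huB1
    have harc2 : (Walk.cons h B1).reverse.IsPath := hconsB1.reverse
    have harc2len : (Walk.cons h B1).reverse.length = B1.length + 1 := by
      rw [length_reverse, length_cons]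
    -- supports of arcs are inside u :: Q.support
    have hdisjB2 : ∀ y ∈ P.support, y ∈ B2.support → y = w := by
      intro y hy hyB
      exact honly' y hy (Q.support_dropUntil_subset hwQ hyB)
    have hdisjArc2 : ∀ y ∈ P.support, y ∈ (Walk.cons h B1).reverse.support → y = w := by
      intro y hy hyB
      rw [support_reverse, List.mem_reverse, support_cons, List.mem_cons] at hyB
      rcases hyB with rfl | hyB
      · exact absurd rfl (hPu y hy)
      · exact honly' y hy (Q.support_takeUntil_subset hwQ hyB)
    by_cases hpar : Even (P.length + B2.length)
    · exact build_cycle hadj P hP hPu B2 hB2path hdisjB2 hpar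
    · apply build_cycle hadj P hP hPu _ harc2 hdisjArc2
      rw [harc2len]
      rw [Nat.even_iff] at hQeven ⊢
      rw [Nat.even_iff] at hpar
      omega

/-- Every vertex connected to a vertex on an odd cycle lies on an odd cycle. -/
private lemma vertex_on_odd_cycle [DecidableEq V]
    (hdel : ∀ v : V, (G.induce {x | x ≠ v}).Connected) :
    ∀ {z c : V} (_ : G.Walk z c) (C : G.Walk c c), C.IsCycle → Odd C.length →
      ∃ (d : V) (C₂ : G.Walk d d), C₂.IsCycle ∧ Odd C₂.length ∧ z ∈ C₂.support := by
  intro z c R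
  induction R with
  | nil =>
    intro C hC hodd
    exact ⟨_, C, hC, hodd, C.start_mem_support⟩
  | @cons z z₁ _ h R ih =>
    intro C hC hodd
    obtain ⟨d, C₂, h1, h2, h3⟩ := ih C hC hodd
    obtain ⟨b, D, hD1, hD2, hD3⟩ :=
      edge_in_odd_cycle_of_mem C₂ h1 h2 h3 h.symm (hdel z₁)
    exact ⟨b, D, hD1, hD2, D.snd_mem_support_of_mem_edges hD3⟩

end TwoConnectedAux

/-- In a 2-connected non-bipartite graph, every edge is contained in an odd
cycle. -/
theorem stmt_2 {V : Type*} [Fintype V] (G : SimpleGraph V) (hG : TwoConnected G)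
    (hbip : ¬ G.Colorable 2) :
    ∀ e ∈ G.edgeSet, ∃ (b : V) (D : G.Walk b b),
      D.IsCycle ∧ Odd D.length ∧ e ∈ D.edges := by
  classical
  obtain ⟨hcard, hconn, hdel⟩ := hG
  obtain ⟨a, W, hWodd⟩ := TwoConnectedAux.exists_odd_closed_walk hconn hbip
  obtain ⟨c, C, hC, hCodd⟩ :=
    TwoConnectedAux.exists_odd_cycle_of_walk W.length W rfl hWodd
  intro e he
  induction e using Sym2.ind with
  | _ u v =>
    rw [SimpleGraph.mem_edgeSet] at he
    obtain ⟨d, C₂, h1, h2, h3⟩ :=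
      TwoConnectedAux.vertex_on_odd_cycle hdel (hconn.preconnected u c).some C hC hCodd
    exact TwoConnectedAux.edge_in_odd_cycle_of_mem C₂ h1 h2 h3 he (hdel u)
end

section
/- Let G be a 2-connected simple graph and let v be a vertex of G with degree at least 3. Then there exists a cycle of even length in G containing the vertex v. -/
open SimpleGraph

section Aux

variable {V : Type*} {G : SimpleGraph V}

lemma path_append_aux {a x c : V} {p : G.Walk a x} {q : G.Walk x c}
    (hp : p.IsPath) (hq : q.IsPath)
    (hmeet : ∀ y, y ∈ p.support → y ∈ q.support → y = x) :
    (p.append q).IsPath := by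
  rw [Walk.isPath_def, Walk.support_append]
  refine List.Nodup.append hp.support_nodup hq.support_nodup.tail ?_
  intro y hyp hyq
  have hyx : y = x := hmeet y hyp (List.mem_of_mem_tail hyq)
  subst hyx
  have hnd := hq.support_nodup
  rw [q.support_eq_cons] at hnd
  exact (List.nodup_cons.mp hnd).1 hyq

lemma build_cycle {v a c x : V} (hva : G.Adj v a) (hvc : G.Adj v c) (hac : a ≠ c)
    {p : G.Walk a x} {q : G.Walk c x} (hp : p.IsPath) (hq : q.IsPath)
    (hvp : v ∉ p.support) (hvq : v ∉ q.support)
    (hmeet : ∀ y, y ∈ p.support → y ∈ q.support → y = x) :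
    ∃ D : G.Walk v v, D.IsCycle ∧ D.length = p.length + q.length + 2 ∧ v ∈ D.support := by
  have hPQ : (p.append q.reverse).IsPath := by
    refine path_append_aux hp hq.reverse ?_
    intro y hyp hyq
    exact hmeet y hyp (by simpa [Walk.support_reverse] using hyq)
  have hvPQ : v ∉ (p.append q.reverse).support := by
    intro h
    rcases (Walk.mem_support_append_iff _ _).mp h with h | h
    · exact hvp h
    · exact hvq (by simpa [Walk.support_reverse] using h)
  have hP : ((p.append q.reverse).concat hvc.symm).IsPath := by
    rw [Walk.concat_eq_append]
    refine path_append_aux hPQ ?_ ?_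
    · rw [Walk.cons_isPath_iff]
      exact ⟨Walk.IsPath.nil, by simp [hvc.ne']⟩
    · intro y hy hy2
      simp only [Walk.support_cons, Walk.support_nil, List.mem_cons,
        List.mem_singleton, List.not_mem_nil, or_false] at hy2
      rcases hy2 with rfl | rfl
      · rfl
      · exact absurd hy hvPQ
  have hedge : s(v, a) ∉ ((p.append q.reverse).concat hvc.symm).edges := by
    intro h
    rw [Walk.concat_eq_append, Walk.edges_append] at h
    rcases List.mem_append.mp h with h | h
    · exact hvPQ (Walk.fst_mem_support_of_mem_edges _ h)
    · simp only [Walk.edges_cons, Walk.edges_nil, List.mem_singleton] at h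
      rw [Sym2.eq_iff] at h
      rcases h with ⟨rfl, rfl⟩ | ⟨-, rfl⟩
      · exact hva.ne rfl
      · exact hac rfl
  refine ⟨Walk.cons hva ((p.append q.reverse).concat hvc.symm), ?_, ?_, ?_⟩
  · exact (Walk.cons_isCycle_iff _ _).mpr ⟨hP, hedge⟩
  · simp [Walk.length_concat, Walk.length_append, Walk.length_reverse]
  · simp

lemma first_hit {c b : V} (q : G.Walk c b) (S : Set V) [DecidablePred (· ∈ S)]
    (hb : b ∈ S) :
    ∃ x, x ∈ S ∧ ∃ w : G.Walk c x,
      (∀ y ∈ w.support, y ∈ q.support) ∧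
      (q.IsPath → w.IsPath) ∧
      (∀ y ∈ w.support, y ∈ S → y = x) := by
  induction q with
  | nil =>
    exact ⟨_, hb, Walk.nil, by simp, fun _ => Walk.IsPath.nil, by simp⟩
  | @cons c d b h q₁ ih =>
    by_cases hc : c ∈ S
    · refine ⟨c, hc, Walk.nil, by simp, fun _ => Walk.IsPath.nil, by simp⟩
    · obtain ⟨x, hx, w, hsub, hpath, hlast⟩ := ih hb
      refine ⟨x, hx, Walk.cons h w, ?_, ?_, ?_⟩
      · intro y hy
        rw [Walk.support_cons] at hy ⊢
        rcases List.mem_cons.mp hy with rfl | hy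
        · exact List.mem_cons_self
        · exact List.mem_cons_of_mem _ (hsub y hy)
      · intro hq
        rw [Walk.cons_isPath_iff] at hq ⊢
        exact ⟨hpath hq.1, fun hcw => hq.2 (hsub c hcw)⟩
      · intro y hy hyS
        rw [Walk.support_cons] at hy
        rcases List.mem_cons.mp hy with rfl | hy
        · exact absurd hyS hc
        · exact hlast y hy hyS

end Aux

/-- In a 2-connected graph, every vertex of degree at least 3 lies on an even
cycle. -/
theorem stmt_5 {V : Type*} [Fintype V] (G : SimpleGraph V) [DecidableRel G.Adj]
    (hG : TwoConnected G) (v : V) (hdeg : 3 ≤ G.degree v) :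
    ∃ (b : V) (D : G.Walk b b), D.IsCycle ∧ Even D.length ∧ v ∈ D.support := by
  classical
  have hcard : 3 ≤ (G.neighborFinset v).card := hdeg
  obtain ⟨a, ha⟩ := Finset.card_pos.mp (by omega : 0 < (G.neighborFinset v).card)
  have h2 : 0 < ((G.neighborFinset v).erase a).card := by
    rw [Finset.card_erase_of_mem ha]; omega
  obtain ⟨b, hb⟩ := Finset.card_pos.mp h2
  have h3 : 0 < (((G.neighborFinset v).erase a).erase b).card := by
    rw [Finset.card_erase_of_mem hb, Finset.card_erase_of_mem ha]; omega
  obtain ⟨c, hc⟩ := Finset.card_pos.mp h3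
  rw [Finset.mem_erase] at hb hc
  rw [Finset.mem_erase] at hc
  have hcb : c ≠ b := hc.1
  have hca : c ≠ a := hc.2.1
  have hcN := hc.2.2
  have hva : G.Adj v a := (SimpleGraph.mem_neighborFinset _ _ _).mp ha
  have hvb : G.Adj v b := (SimpleGraph.mem_neighborFinset _ _ _).mp hb.2
  have hvc : G.Adj v c := (SimpleGraph.mem_neighborFinset _ _ _).mp hcN
  have hab : a ≠ b := fun h => hb.1 h.symm
  have hac : a ≠ c := fun h => hca h.symm
  have hbc : b ≠ c := fun h => hcb h.symm
  -- v-avoiding paths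
  have avoid : ∀ u w : V, u ≠ v → w ≠ v →
      ∃ p : G.Walk u w, p.IsPath ∧ v ∉ p.support := by
    intro u w hu hw
    obtain ⟨q⟩ := (hG.2.2 v).preconnected ⟨u, hu⟩ ⟨w, hw⟩
    let q' : G.Walk u w := q.map (SimpleGraph.Embedding.induce {x | x ≠ v}).toHom
    refine ⟨q'.bypass, Walk.bypass_isPath q', fun hv => ?_⟩
    have hmem := q'.support_bypass_subset hv
    change v ∈ (q.map (SimpleGraph.Embedding.induce {x | x ≠ v}).toHom).support at hmem
    rw [Walk.support_map] at hmem
    obtain ⟨⟨y, hy⟩, -, h2⟩ := List.mem_map.mp hmem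
    exact hy (by simpa using h2)
  obtain ⟨pab, hpab, hvpab⟩ := avoid a b hva.ne' hvb.ne'
  by_cases hev : Even pab.length
  · obtain ⟨D, hD, hlen, hvD⟩ :=
      build_cycle hva hvb hab hpab (q := Walk.nil) Walk.IsPath.nil hvpab
        (by simp [hvb.ne]) (by simp)
    refine ⟨v, D, hD, ?_, hvD⟩
    rw [hlen]
    simpa using hev.add (by simp : Even 2)
  · obtain ⟨qcb, hqcb, hvqcb⟩ := avoid c b hvc.ne' hvb.ne'
    have hbS : b ∈ {y | y ∈ pab.support} := pab.end_mem_support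
    obtain ⟨x, hxS, w, hsub, hpathf, hlast⟩ := first_hit qcb {y | y ∈ pab.support} hbS
    have hw : w.IsPath := hpathf hqcb
    have hx : x ∈ pab.support := hxS
    have hvw : v ∉ w.support := fun h => hvqcb (hsub v h)
    have hp1 : (pab.takeUntil x hx).IsPath := hpab.takeUntil hx
    have hp2 : (pab.dropUntil x hx).IsPath := hpab.dropUntil hx
    have hvp1 : v ∉ (pab.takeUntil x hx).support :=
      fun h => hvpab (Walk.support_takeUntil_subset _ hx h)
    have hvp2 : v ∉ (pab.dropUntil x hx).support :=
      fun h => hvpab (Walk.support_dropUntil_subset _ hx h)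
    have hlen12 : (pab.takeUntil x hx).length + (pab.dropUntil x hx).length
        = pab.length := by
      have := congrArg Walk.length (pab.take_spec hx)
      rwa [Walk.length_append] at this
    have hoddpab : pab.length % 2 = 1 := Nat.not_even_iff.mp hev
    rcases Nat.even_or_odd ((pab.takeUntil x hx).length + w.length) with hpar | hpar
    · obtain ⟨D, hD, hlen, hvD⟩ :=
        build_cycle hva hvc hac hp1 hw hvp1 hvw
          (fun y hy hy2 => hlast y hy2 (Walk.support_takeUntil_subset _ hx hy))
      refine ⟨v, D, hD, ?_, hvD⟩
      rw [hlen]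
      simpa using hpar.add (by simp : Even 2)
    · have hpar2 : Even ((pab.dropUntil x hx).length + w.length) := by
        rw [Nat.even_iff]
        have := Nat.odd_iff.mp hpar
        omega
      have hp2r : (pab.dropUntil x hx).reverse.IsPath := hp2.reverse
      have hvp2r : v ∉ (pab.dropUntil x hx).reverse.support := by
        simpa [Walk.support_reverse] using hvp2
      obtain ⟨D, hD, hlen, hvD⟩ :=
        build_cycle hvb hvc hbc hp2r hw hvp2r hvw
          (fun y hy hy2 => hlast y hy2
            (Walk.support_dropUntil_subset _ hx (by simpa [Walk.support_reverse] using hy)))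
      refine ⟨v, D, hD, ?_, hvD⟩
      rw [hlen, Walk.length_reverse]
      simpa using hpar2.add (by simp : Even 2)
end

section
/- Let G be a 2-edge-connected simple graph and let v be a vertex of G whose degree is odd. Then there exists a cycle of even length in G containing the vertex v. -/
open SimpleGraph Walk

section AuxLemmas

variable {V : Type*} {G : SimpleGraph V}

/-- Every `getVert` of a walk is in its support. -/
lemma aux_getVert_mem_support {u v : V} (p : G.Walk u v) (i : ℕ) :
    p.getVert i ∈ p.support := by
  induction p generalizing i with
  | nil => cases i <;> simp [Walk.getVert]
  | cons h q ih =>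
    cases i with
    | zero => simp [Walk.getVert]
    | succ n =>
      simp only [Walk.getVert_cons_succ, Walk.support_cons, List.mem_cons]
      exact Or.inr (ih n)

/-- On a walk with no repeated vertices, `getVert` is injective (up to length). -/
lemma aux_getVert_inj {u v : V} (p : G.Walk u v) (hp : p.support.Nodup) {i j : ℕ}
    (hi : i ≤ p.length) (hj : j ≤ p.length) (h : p.getVert i = p.getVert j) : i = j := by
  induction p generalizing i j with
  | nil => simp at hi hj; omega
  | cons ha q ih =>
    rw [Walk.support_cons, List.nodup_cons] at hp
    cases i with
    | zero =>
      cases j with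
      | zero => rfl
      | succ m =>
        rw [Walk.getVert_cons_succ] at h
        simp only [Walk.getVert_zero] at h
        exact absurd (h ▸ aux_getVert_mem_support q m) hp.1
    | succ n =>
      cases j with
      | zero =>
        rw [Walk.getVert_cons_succ] at h
        simp only [Walk.getVert_zero] at h
        exact absurd (h ▸ aux_getVert_mem_support q n) hp.1
      | succ m =>
        rw [Walk.getVert_cons_succ, Walk.getVert_cons_succ] at h
        simp only [Walk.length_cons] at hi hj
        have := ih hp.2 (by omega) (by omega) h
        omega

/-- A path between distinct vertices that contains the edge between its endpoints
has length one. -/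
lemma aux_edge_end {a b : V} (p : G.Walk a b) (hp : p.IsPath) (hab : a ≠ b)
    (he : s(a, b) ∈ p.edges) : p.length = 1 := by
  cases p with
  | @cons _ c _ h q =>
    rw [Walk.edges_cons, List.mem_cons] at he
    rw [Walk.cons_isPath_iff] at hp
    rcases he with he | he
    · rw [Sym2.eq_iff] at he
      rcases he with ⟨-, rfl⟩ | ⟨rfl, rfl⟩
      · cases q with
        | nil => simp
        | cons h' r =>
          rw [Walk.cons_isPath_iff] at hp
          exact absurd r.end_mem_support hp.1.2
      · exact absurd rfl hab
    · exact absurd (Walk.fst_mem_support_of_mem_edges q he) hp.2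
  | nil => simp at he

/-- A walk of length one contains the edge between its endpoints. -/
lemma aux_len_one_edge {a b : V} (p : G.Walk a b) (h : p.length = 1) :
    s(a, b) ∈ p.edges := by
  cases p with
  | nil => simp at h
  | cons ha q =>
    simp only [Walk.length_cons] at h
    have h0 : q.length = 0 := by omega
    have := Walk.eq_of_length_eq_zero h0
    subst this
    simp [Walk.edges_cons]

/-- Gluing two internally disjoint paths between `v` and `x` gives a cycle. -/
lemma aux_glue {v x : V} (hvx : v ≠ x) (P1 : G.Walk v x) (P2 : G.Walk x v)
    (h1 : P1.IsPath) (h2 : P2.IsPath)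
    (hsupp : ∀ y, y ∈ P1.support → y ∈ P2.support → y = v ∨ y = x)
    (hlen : ¬(P1.length = 1 ∧ P2.length = 1)) : (P1.append P2).IsCycle := by
  have hedis : ∀ ed ∈ P1.edges, ed ∉ P2.edges := by
    intro ed hed1 hed2
    induction ed using Sym2.ind with
    | _ a b =>
      have hab : a ≠ b := G.ne_of_adj (Walk.edges_subset_edgeSet P1 hed1)
      have ha1 := Walk.fst_mem_support_of_mem_edges P1 hed1
      have hb1 := Walk.snd_mem_support_of_mem_edges P1 hed1
      have ha2 := Walk.fst_mem_support_of_mem_edges P2 hed2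
      have hb2 := Walk.snd_mem_support_of_mem_edges P2 hed2
      have hevx : s(a, b) = s(v, x) := by
        rcases hsupp a ha1 ha2 with rfl | rfl <;> rcases hsupp b hb1 hb2 with rfl | rfl
        · exact absurd rfl hab
        · rfl
        · exact Sym2.eq_swap
        · exact absurd rfl hab
      rw [hevx] at hed1 hed2
      exact hlen ⟨aux_edge_end P1 h1 hvx hed1,
        aux_edge_end P2 h2 (Ne.symm hvx) (Sym2.eq_swap ▸ hed2)⟩
  have hvt1 : v ∉ P1.support.tail := by
    have := h1.support_nodup
    rw [P1.support_eq_cons, List.nodup_cons] at this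
    exact this.1
  have hxt2 : x ∉ P2.support.tail := by
    have := h2.support_nodup
    rw [P2.support_eq_cons, List.nodup_cons] at this
    exact this.1
  refine ⟨⟨⟨?_⟩, ?_⟩, ?_⟩
  · rw [Walk.edges_append]
    exact List.Nodup.append h1.isTrail.edges_nodup h2.isTrail.edges_nodup hedis
  · cases P1 with
    | nil => exact absurd rfl hvx
    | cons h q => simp [Walk.cons_append]
  · have hsup : (P1.append P2).support = P1.support ++ P2.support.tail :=
      Walk.support_append P1 P2
    rw [hsup, P1.support_eq_cons, List.cons_append, List.tail_cons]
    refine List.Nodup.append ?_ ?_ ?_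
    · have := h1.support_nodup
      rw [P1.support_eq_cons, List.nodup_cons] at this
      exact this.2
    · have := h2.support_nodup
      rw [P2.support_eq_cons, List.nodup_cons] at this
      exact this.2
    · intro y hy1 hy2
      have hy1' : y ∈ P1.support := P1.support_eq_cons ▸ List.mem_cons_of_mem _ hy1
      have hy2' : y ∈ P2.support := P2.support_eq_cons ▸ List.mem_cons_of_mem _ hy2
      rcases hsupp y hy1' hy2' with rfl | rfl
      · exact hvt1 hy1
      · exact hxt2 hy2

/-- Splitting a cycle at a vertex `x ≠ v` gives two paths. -/
lemma aux_cycle_split [DecidableEq V] {v x : V} (C : G.Walk v v) (hC : C.IsCycle)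
    (hx : x ∈ C.support) (hxv : x ≠ v) :
    (C.takeUntil x hx).IsPath ∧ (C.dropUntil x hx).IsPath := by
  set A := C.takeUntil x hx with hA
  set B := C.dropUntil x hx with hB
  have hspec : A.append B = C := C.take_spec hx
  have htail : C.support.tail = A.support.tail ++ B.support.tail := by
    have h1 : C.support = A.support ++ B.support.tail := by
      rw [← hspec, Walk.support_append]
    rw [C.support_eq_cons, A.support_eq_cons, List.cons_append] at h1
    exact (List.cons.injEq _ _ _ _ ▸ h1).2
  have hnd : (A.support.tail ++ B.support.tail).Nodup := htail ▸ hC.support_nodup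
  have hndA : A.support.tail.Nodup := hnd.of_append_left
  have hndB : B.support.tail.Nodup := hnd.of_append_right
  have hdisj : List.Disjoint A.support.tail B.support.tail :=
    List.disjoint_of_nodup_append hnd
  have hBne : v ∈ B.support.tail := by
    have := B.end_mem_support
    rw [B.support_eq_cons, List.mem_cons] at this
    rcases this with h | h
    · exact absurd h.symm hxv
    · exact h
  have hAne : x ∈ A.support.tail := by
    have := A.end_mem_support
    rw [A.support_eq_cons, List.mem_cons] at this
    rcases this with h | h
    · exact absurd h hxv
    · exact h
  constructor
  · apply Walk.IsPath.mk'
    rw [A.support_eq_cons, List.nodup_cons]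
    exact ⟨fun hv => hdisj hv hBne, hndA⟩
  · apply Walk.IsPath.mk'
    rw [B.support_eq_cons, List.nodup_cons]
    exact ⟨fun hx' => hdisj hAne hx', hndB⟩

/-- The second and second-to-last vertices of a cycle are distinct. -/
lemma aux_snd_ne_penult {v : V} (C : G.Walk v v) (hC : C.IsCycle) :
    C.getVert 1 ≠ C.getVert (C.length - 1) := by
  have h3 := hC.three_le_length
  cases C with
  | nil => simp at h3
  | cons h p =>
    have hp : p.IsPath := ((Walk.cons_isCycle_iff p h).mp hC).1
    simp only [Walk.length_cons] at h3 ⊢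
    have hlp : 2 ≤ p.length := by omega
    have h1 : (Walk.cons h p).getVert 1 = p.getVert 0 := rfl
    have h2 : (Walk.cons h p).getVert (p.length + 1 - 1) = p.getVert (p.length - 1) := by
      have : p.length + 1 - 1 = (p.length - 1) + 1 := by omega
      rw [this, Walk.getVert_cons_succ]
    rw [h1, h2]
    intro heq
    have := aux_getVert_inj p hp.support_nodup (by omega) (by omega) heq
    omega

/-- In a path ending at `b`, an edge containing `b` is the last edge. -/
lemma aux_path_end_edge {c b u : V} (p : G.Walk c b) (hp : p.IsPath)
    (he : s(b, u) ∈ p.edges) : u = p.getVert (p.length - 1) := by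
  induction p with
  | nil => simp at he
  | @cons _ d _ h q ih =>
    rw [Walk.edges_cons, List.mem_cons] at he
    rw [Walk.cons_isPath_iff] at hp
    rcases he with he | he
    · rw [Sym2.eq_iff] at he
      rcases he with ⟨rfl, rfl⟩ | ⟨rfl, rfl⟩
      · exact absurd q.end_mem_support hp.2
      · cases q with
        | nil => simp [Walk.getVert]
        | cons h' r =>
          rw [Walk.cons_isPath_iff] at hp
          exact absurd r.end_mem_support hp.1.2
    · have hqne : q.length ≠ 0 := by
        intro h0
        cases q with
        | nil => simp at he
        | cons _ _ => simp at h0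
      have h2 : q.length + 1 - 1 = (q.length - 1) + 1 := by omega
      rw [Walk.length_cons, h2, Walk.getVert_cons_succ]
      exact ih hp.1 he

/-- An edge of a cycle at `v` containing `v` goes to the second or second-to-last vertex. -/
lemma aux_cycle_edge_at {v u : V} (C : G.Walk v v) (hC : C.IsCycle)
    (hu : s(v, u) ∈ C.edges) : u = C.getVert 1 ∨ u = C.getVert (C.length - 1) := by
  cases C with
  | nil => simp at hu
  | @cons _ c _ h p =>
    have hp : p.IsPath := ((Walk.cons_isCycle_iff p h).mp hC).1
    rw [Walk.edges_cons, List.mem_cons] at hu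
    rcases hu with hu | hu
    · rw [Sym2.eq_iff] at hu
      rcases hu with ⟨-, rfl⟩ | ⟨rfl, rfl⟩
      · left; rw [show (1:ℕ) = 0 + 1 from rfl, Walk.getVert_cons_succ, Walk.getVert_zero]
      · exact absurd rfl (G.ne_of_adj h)
    · right
      have := aux_path_end_edge p hp hu
      rw [this]
      simp only [Walk.length_cons]
      have hqne : p.length ≠ 0 := by
        intro h0
        cases p with
        | nil => simp at hu
        | cons _ _ => simp at h0
      have h2 : p.length + 1 - 1 = (p.length - 1) + 1 := by omega
      rw [h2, Walk.getVert_cons_succ]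

/-- Truncate a walk at its first vertex belonging to a set `S` (the endpoint is in `S`). -/
lemma aux_first_hit (S : Set V) : ∀ {w v : V} (W : G.Walk w v), v ∈ S →
    ∃ x, x ∈ S ∧ ∃ (W1 : G.Walk w x) (W2 : G.Walk x v), W = W1.append W2 ∧
      ∀ y ∈ W1.support, y ∈ S → y = x := by
  intro w v W hv
  induction W with
  | nil => exact ⟨_, hv, Walk.nil, Walk.nil, rfl, fun y hy _ => by simpa using hy⟩
  | @cons a b c h W' ih =>
    by_cases ha : a ∈ S
    · exact ⟨a, ha, Walk.nil, Walk.cons h W', rfl, fun y hy _ => by simpa using hy⟩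
    · obtain ⟨x, hxS, W1, W2, heq, hfirst⟩ := ih hv
      refine ⟨x, hxS, Walk.cons h W1, W2, by rw [Walk.cons_append, heq], ?_⟩
      intro y hy hyS
      rw [Walk.support_cons, List.mem_cons] at hy
      rcases hy with rfl | hy
      · exact absurd hyS ha
      · exact hfirst y hy hyS

lemma aux_cycle_adj1 {v : V} (C : G.Walk v v) (hC : C.IsCycle) : G.Adj v (C.getVert 1) := by
  have h3 := hC.three_le_length
  have := C.adj_getVert_succ (i := 0) (by omega)
  rwa [C.getVert_zero] at this

lemma aux_cycle_adj2 {v : V} (C : G.Walk v v) (hC : C.IsCycle) :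
    G.Adj v (C.getVert (C.length - 1)) := by
  have h3 := hC.three_le_length
  have := C.adj_getVert_succ (i := C.length - 1) (by omega)
  have he : C.length - 1 + 1 = C.length := by omega
  rw [he, C.getVert_length] at this
  exact this.symm

/-- Counting: a family of cycles through `v` pairwise meeting only at `v`
yields `2k` distinct neighbors of `v` covering all their edges at `v`. -/
lemma aux_count {v : V} (L : List (G.Walk v v)) (hcyc : ∀ C ∈ L, C.IsCycle)
    (hpair : L.Pairwise fun C C' => ∀ y, y ∈ C.support → y ∈ C'.support → y = v) :
    ∃ U : List V, U.Nodup ∧ (∀ u ∈ U, G.Adj v u) ∧ U.length = 2 * L.length ∧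
      (∀ u ∈ U, ∃ C ∈ L, u ∈ C.support) ∧
      (∀ C ∈ L, ∀ u, s(v, u) ∈ C.edges → u ∈ U) := by
  induction L with
  | nil => exact ⟨[], by simp⟩
  | cons C L' ih =>
    rw [List.pairwise_cons] at hpair
    obtain ⟨U', hnd, hadj, hlen, hsup, hedge⟩ :=
      ih (fun C' hC' => hcyc C' (List.mem_cons_of_mem _ hC')) hpair.2
    have hCc : C.IsCycle := hcyc C (List.mem_cons_self)
    set a1 := C.getVert 1 with ha1
    set a2 := C.getVert (C.length - 1) with ha2
    have hadj1 := aux_cycle_adj1 C hCc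
    have hadj2 := aux_cycle_adj2 C hCc
    have hmem1 : a1 ∈ C.support := aux_getVert_mem_support C 1
    have hmem2 : a2 ∈ C.support := aux_getVert_mem_support C _
    have hnotU : ∀ b ∈ C.support, G.Adj v b → b ∉ U' := by
      intro b hb hvb hbU
      obtain ⟨C', hC'L, hbC'⟩ := hsup b hbU
      exact G.ne_of_adj hvb ((hpair.1 C' hC'L b hb hbC').symm)
    refine ⟨a1 :: a2 :: U', ?_, ?_, ?_, ?_, ?_⟩
    · rw [List.nodup_cons, List.nodup_cons, List.mem_cons]
      push_neg
      exact ⟨⟨aux_snd_ne_penult C hCc, hnotU a1 hmem1 hadj1⟩, hnotU a2 hmem2 hadj2, hnd⟩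
    · intro u hu
      rw [List.mem_cons, List.mem_cons] at hu
      rcases hu with rfl | rfl | hu
      · exact hadj1
      · exact hadj2
      · exact hadj u hu
    · simp only [List.length_cons, hlen]; omega
    · intro u hu
      rw [List.mem_cons, List.mem_cons] at hu
      rcases hu with rfl | rfl | hu
      · exact ⟨C, List.mem_cons_self, hmem1⟩
      · exact ⟨C, List.mem_cons_self, hmem2⟩
      · obtain ⟨C', h1, h2⟩ := hsup u hu
        exact ⟨C', List.mem_cons_of_mem _ h1, h2⟩
    · intro C0 hC0 u hu
      rcases List.mem_cons.mp hC0 with heq | hC0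
      · subst heq
        rcases aux_cycle_edge_at C0 hCc hu with rfl | rfl
        · exact List.mem_cons_self
        · exact List.mem_cons_of_mem _ (List.mem_cons_self)
      · exact List.mem_cons_of_mem _ (List.mem_cons_of_mem _ (hedge C0 hC0 u hu))

end AuxLemmas

/-- A graph is 2-edge-connected if it is connected and remains connected after
the deletion of any single edge. -/
def TwoEdgeConnected {V : Type*} (G : SimpleGraph V) : Prop :=
  G.Connected ∧ ∀ e ∈ G.edgeSet, (G.deleteEdges {e}).Connected

/-- In a 2-edge-connected graph, every vertex of odd degree lies on an even
cycle. -/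
theorem stmt_6 {V : Type*} [Fintype V] (G : SimpleGraph V) [DecidableRel G.Adj]
    (hG : TwoEdgeConnected G) (v : V) (hdeg : Odd (G.degree v)) :
    ∃ (b : V) (D : G.Walk b b), D.IsCycle ∧ Even D.length ∧ v ∈ D.support := by
  classical
  by_contra hno
  push_neg at hno
  have hodd : ∀ D : G.Walk v v, D.IsCycle → Odd D.length := by
    intro D hD
    rcases Nat.even_or_odd D.length with hE | hO
    · exact absurd D.start_mem_support (hno v D hD hE)
    · exact hO
  have key : ∀ k : ℕ, ∃ L : List (G.Walk v v), L.length = k ∧ (∀ C ∈ L, C.IsCycle) ∧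
      L.Pairwise (fun C C' => ∀ y, y ∈ C.support → y ∈ C'.support → y = v) := by
    intro k
    induction k with
    | zero => exact ⟨[], rfl, by simp, List.Pairwise.nil⟩
    | succ n ihk =>
      obtain ⟨L, hLlen, hcyc, hpair⟩ := ihk
      obtain ⟨U, hUnd, hUadj, hUlen, hUsup, hUedge⟩ := aux_count L hcyc hpair
      have hUsub : U.toFinset ⊆ G.neighborFinset v := fun u hu =>
        (G.mem_neighborFinset v u).mpr (hUadj u (List.mem_toFinset.mp hu))
      have hUcard : U.toFinset.card = 2 * n := by
        rw [List.toFinset_card_of_nodup hUnd, hUlen, hLlen]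
      have hle : U.toFinset.card ≤ G.degree v := by
        rw [← G.card_neighborFinset_eq_degree v]
        exact Finset.card_le_card hUsub
      obtain ⟨w, hwadj, hwU⟩ : ∃ w, G.Adj v w ∧ w ∉ U := by
        by_contra hq
        push_neg at hq
        have hsub2 : G.neighborFinset v ⊆ U.toFinset := fun u hu =>
          List.mem_toFinset.mpr (hq u ((G.mem_neighborFinset v u).mp hu))
        have h2 := Finset.card_le_card hsub2
        rw [hUcard, G.card_neighborFinset_eq_degree v] at h2
        obtain ⟨m, hm⟩ := hdeg
        omega
      have hwe : ∀ C ∈ L, s(v, w) ∉ C.edges := fun C hC he => hwU (hUedge C hC w he)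
      have hconn := hG.2 s(v, w) (G.mem_edgeSet.mpr hwadj)
      obtain ⟨W0⟩ := hconn w v
      have hPedges : ∀ ed ∈ (W0.toPath : (G.deleteEdges {s(v, w)}).Walk w v).edges,
          ed ∈ G.edgeSet := by
        intro ed hed
        have := Walk.edges_subset_edgeSet _ hed
        rw [edgeSet_deleteEdges] at this
        exact this.1
      set P : G.Walk w v :=
        (W0.toPath : (G.deleteEdges {s(v, w)}).Walk w v).transfer G hPedges with hPdef
      have hPpath : P.IsPath := Walk.IsPath.transfer _ W0.toPath.2
      have hPe : s(v, w) ∉ P.edges := by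
        rw [hPdef, Walk.edges_transfer]
        intro h
        have := Walk.edges_subset_edgeSet _ h
        rw [edgeSet_deleteEdges] at this
        exact this.2 rfl
      set S : Set V := {y | y = v ∨ ∃ C ∈ L, y ∈ C.support} with hSdef
      obtain ⟨x, hxS, P1, P2, heq, hfirst⟩ := aux_first_hit S P (Or.inl rfl)
      have hP1path : P1.IsPath := Walk.IsPath.of_append_left (heq ▸ hPpath)
      have hP1e : s(v, w) ∉ P1.edges := fun h =>
        hPe (by rw [heq, Walk.edges_append]; exact List.mem_append_left _ h)
      by_cases hxv : x = v
      · subst hxv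
        refine ⟨(Walk.cons hwadj P1) :: L, by simp [hLlen], ?_, ?_⟩
        · intro C hC
          rcases List.mem_cons.mp hC with heqC | hC
          · subst heqC
            exact (Walk.cons_isCycle_iff P1 hwadj).mpr ⟨hP1path, hP1e⟩
          · exact hcyc C hC
        · rw [List.pairwise_cons]
          refine ⟨?_, hpair⟩
          intro C hC y hy hyC
          rw [Walk.support_cons, List.mem_cons] at hy
          rcases hy with rfl | hy
          · rfl
          · exact hfirst y hy (Or.inr ⟨C, hC, hyC⟩)
      · exfalso
        have hxv' : x ≠ v := hxv
        rcases hxS with heq' | ⟨C, hCL, hxC⟩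
        · exact hxv heq'
        have hCc := hcyc C hCL
        have hCOdd := hodd C hCc
        have hvP1 : v ∉ P1.support := fun h => hxv' ((hfirst v h (Or.inl rfl)).symm)
        have hQpath : (Walk.cons hwadj P1).IsPath :=
          (Walk.cons_isPath_iff hwadj P1).mpr ⟨hP1path, hvP1⟩
        have hCS : ∀ y ∈ C.support, y ∈ S := fun y hy => Or.inr ⟨C, hCL, hy⟩
        have hQe : ∀ ed ∈ (Walk.cons hwadj P1).edges, ed ∈ C.edges → False := by
          intro ed
          induction ed using Sym2.ind with
          | _ a b =>
            intro hed hedC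
            rw [Walk.edges_cons, List.mem_cons] at hed
            rcases hed with heq2 | hed'
            · rw [heq2] at hedC
              exact hwe C hCL hedC
            · have ha := Walk.fst_mem_support_of_mem_edges P1 hed'
              have hb := Walk.snd_mem_support_of_mem_edges P1 hed'
              have hax := hfirst a ha (hCS a (Walk.fst_mem_support_of_mem_edges C hedC))
              have hbx := hfirst b hb (hCS b (Walk.snd_mem_support_of_mem_edges C hedC))
              exact G.ne_of_adj (Walk.edges_subset_edgeSet C hedC) (hax.trans hbx.symm)
        obtain ⟨hApath, hBpath⟩ := aux_cycle_split C hCc hxC hxv'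
        set A := C.takeUntil x hxC with hAdef
        set B := C.dropUntil x hxC with hBdef
        have hABlen : A.length + B.length = C.length := by
          conv_rhs => rw [← C.take_spec hxC]
          rw [Walk.length_append]
        have hAsub : A.support ⊆ C.support := C.support_takeUntil_subset hxC
        have hBsub : B.support ⊆ C.support := C.support_dropUntil_subset hxC
        have hAe : A.edges ⊆ C.edges := C.edges_takeUntil_subset hxC
        have hBe : B.edges ⊆ C.edges := C.edges_dropUntil_subset hxC
        have hvx : v ≠ x := fun h => hxv' h.symm
        have hD1 : ((Walk.cons hwadj P1).append B).IsCycle := by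
          apply aux_glue hvx _ _ hQpath hBpath
          · intro y hy1 hy2
            rw [Walk.support_cons, List.mem_cons] at hy1
            rcases hy1 with rfl | hy1'
            · exact Or.inl rfl
            · exact Or.inr (hfirst y hy1' (hCS y (hBsub hy2)))
          · rintro ⟨hq1, hb1⟩
            have h1 := aux_len_one_edge _ hq1
            have h2 := aux_len_one_edge _ hb1
            exact hQe _ h1 (hBe (Sym2.eq_swap ▸ h2))
        have hD2 : (A.append (Walk.cons hwadj P1).reverse).IsCycle := by
          apply aux_glue hvx _ _ hApath hQpath.reverse
          · intro y hy1 hy2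
            rw [Walk.support_reverse, List.mem_reverse, Walk.support_cons,
              List.mem_cons] at hy2
            rcases hy2 with rfl | hy2'
            · exact Or.inl rfl
            · exact Or.inr (hfirst y hy2' (hCS y (hAsub hy1)))
          · rintro ⟨ha1, hq1⟩
            rw [Walk.length_reverse] at hq1
            have h1 := aux_len_one_edge _ hq1
            have h2 := aux_len_one_edge _ ha1
            exact hQe _ h1 (hAe h2)
        obtain ⟨m1, hm1⟩ := hodd _ hD1
        obtain ⟨m2, hm2⟩ := hodd _ hD2
        obtain ⟨mc, hmc⟩ := hCOdd
        rw [Walk.length_append] at hm1 hm2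
        rw [Walk.length_reverse] at hm2
        omega
  obtain ⟨L, hLlen, hcyc, hpair⟩ := key (G.degree v + 1)
  obtain ⟨U, hUnd, hUadj, hUlen, -, -⟩ := aux_count L hcyc hpair
  have hUsub : U.toFinset ⊆ G.neighborFinset v := fun u hu =>
    (G.mem_neighborFinset v u).mpr (hUadj u (List.mem_toFinset.mp hu))
  have hle := Finset.card_le_card hUsub
  rw [List.toFinset_card_of_nodup hUnd, hUlen, hLlen,
    G.card_neighborFinset_eq_degree v] at hle
  omega
end

section
/- Let G be a 2-edge-connected simple graph and let v be a vertex of G whose degree is odd. Then the graph G − v (G with the vertex v deleted) has a connected component containing at least 3 neighbors of v. -/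
open SimpleGraph

private lemma aux_reach {V : Type*} (G : SimpleGraph V) (v : V) (s : Set (Sym2 V)) :
    ∀ {a b : V} (q : (G.deleteEdges s).Walk a b), v ∉ q.support →
      ∀ (ha : a ≠ v) (hb : b ≠ v),
      (G.induce {x | x ≠ v}).Reachable ⟨a, ha⟩ ⟨b, hb⟩ := by
  intro a b q
  induction q with
  | nil => intro _ ha hb; rfl
  | cons h q ih =>
    rename_i x y z
    intro hv ha hb
    simp only [SimpleGraph.Walk.support_cons, List.mem_cons] at hv
    push_neg at hv
    have hy : y ≠ v := by
      intro hyv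
      subst hyv
      exact hv.2 q.start_mem_support
    have h1 : (G.induce {x | x ≠ v}).Adj ⟨x, ha⟩ ⟨y, hy⟩ := by
      simp only [SimpleGraph.comap_adj, SimpleGraph.induce_eq_coe_induce_top]
      exact ⟨ha, hy, (SimpleGraph.deleteEdges_adj.mp h).1⟩
    exact h1.reachable.trans (ih hv.2 hy hb)

/-- In a 2-edge-connected graph, if `v` has odd degree, then some connected
component of `G − v` contains at least 3 neighbors of `v`. -/
theorem stmt_7 {V : Type*} [Fintype V] (G : SimpleGraph V) [DecidableRel G.Adj]
    (hG : TwoEdgeConnected G) (v : V) (hdeg : Odd (G.degree v)) :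
    ∃ c : (G.induce {x | x ≠ v}).ConnectedComponent,
      3 ≤ {u : {x : V // x ≠ v} | G.Adj v ↑u ∧
        (G.induce {x | x ≠ v}).connectedComponentMk u = c}.ncard := by
  classical
  set H := G.induce {x | x ≠ v} with hH
  -- key: each component containing a neighbor contains at least two
  have key : ∀ u : {x : V // x ≠ v}, G.Adj v ↑u →
      ∃ w : {x : V // x ≠ v}, w ≠ u ∧ G.Adj v ↑w ∧
        H.connectedComponentMk w = H.connectedComponentMk u := by
    intro u hu
    have he : s(v, (u : V)) ∈ G.edgeSet := hu
    have hconn := hG.2 _ he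
    obtain ⟨w0⟩ := hconn.preconnected v ↑u
    obtain ⟨p, hp⟩ := w0.toPath
    obtain ⟨y, h, q, rfl⟩ := SimpleGraph.Walk.exists_eq_cons_of_ne (Ne.symm u.2) p
    · have hadj : G.Adj v y ∧ s(v, y) ∉ ({s(v, (u : V))} : Set (Sym2 V)) :=
        SimpleGraph.deleteEdges_adj.mp h
      have hy_ne_u : y ≠ (u : V) := by
        intro hyu
        exact hadj.2 (by rw [hyu]; rfl)
      have hy_ne_v : y ≠ v := hadj.1.ne'
      have hvnot : v ∉ q.support := by
        have := hp.support_nodup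
        simp only [SimpleGraph.Walk.support_cons, List.nodup_cons] at this
        exact this.1
      have hreach := aux_reach G v _ q hvnot hy_ne_v u.2
      refine ⟨⟨y, hy_ne_v⟩, ?_, hadj.1, ?_⟩
      · intro hcontra
        exact hy_ne_u (congrArg Subtype.val hcontra)
      · exact SimpleGraph.ConnectedComponent.sound hreach
  -- counting
  have hcard : (Finset.univ.filter fun u : {x : V // x ≠ v} => G.Adj v ↑u).card
      = G.degree v := by
    rw [← SimpleGraph.card_neighborFinset_eq_degree]
    refine Finset.card_bij (fun u _ => (u : V)) ?_ ?_ ?_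
    · intro u hu
      simp only [Finset.mem_filter] at hu
      simpa using hu.2
    · intro a ha b hb hab
      exact Subtype.ext hab
    · intro b hb
      simp only [SimpleGraph.mem_neighborFinset] at hb
      exact ⟨⟨b, hb.ne'⟩, by simpa using hb, rfl⟩
  have hfin : Fintype H.ConnectedComponent := Fintype.ofFinite _
  have hsum : ∑ c : H.ConnectedComponent,
      (Finset.univ.filter fun u : {x : V // x ≠ v} =>
        G.Adj v ↑u ∧ H.connectedComponentMk u = c).card = G.degree v := by
    rw [← hcard]
    rw [Finset.card_eq_sum_card_fiberwise
      (f := fun u => H.connectedComponentMk u) (t := Finset.univ) (fun _ _ => Finset.mem_univ _)]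
    congr 1
    ext c
    congr 1
    ext u
    simp [Finset.mem_filter, and_assoc]
  have hodd : ∃ c : H.ConnectedComponent,
      Odd (Finset.univ.filter fun u : {x : V // x ≠ v} =>
        G.Adj v ↑u ∧ H.connectedComponentMk u = c).card := by
    by_contra hcon
    push_neg at hcon
    simp only [Nat.not_odd_iff_even] at hcon
    have : Even (G.degree v) := by
      rw [← hsum]
      exact Finset.even_sum _ (fun c _ => hcon c)
    exact (Nat.not_odd_iff_even.mpr this) hdeg
  obtain ⟨c, hc⟩ := hodd
  refine ⟨c, ?_⟩
  have hset : {u : {x : V // x ≠ v} | G.Adj v ↑u ∧ H.connectedComponentMk u = c}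
      = ↑(Finset.univ.filter fun u : {x : V // x ≠ v} =>
        G.Adj v ↑u ∧ H.connectedComponentMk u = c) := by
    ext u; simp
  rw [hset, Set.ncard_coe_finset]
  -- the fiber is nonempty (odd), so it has ≥ 2 elements, so ≥ 3 since odd
  have hpos : 0 < (Finset.univ.filter fun u : {x : V // x ≠ v} =>
      G.Adj v ↑u ∧ H.connectedComponentMk u = c).card := by
    rcases hc with ⟨k, hk⟩; omega
  obtain ⟨u, hu⟩ := Finset.card_pos.mp hpos
  simp only [Finset.mem_filter] at hu
  obtain ⟨w, hwu, hwadj, hwc⟩ := key u hu.2.1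
  have h2 : 2 ≤ (Finset.univ.filter fun u : {x : V // x ≠ v} =>
      G.Adj v ↑u ∧ H.connectedComponentMk u = c).card := by
    apply Finset.one_lt_card.mpr
    exact ⟨w, by simp [hwadj, hwc.trans hu.2.2], u, by simp [hu.2], hwu⟩
  rcases hc with ⟨k, hk⟩
  omega
end

section
/- Let G be a 2-edge-connected simple graph and let C be a cycle in G of odd length. Then every edge e of G that does not lie on C is contained in a circuit of even length. -/
open SimpleGraph

namespace SimpleGraph.Walk

variable {V : Type*} {G : SimpleGraph V}

/-- The two (distinct) endpoints of an edge of a walk lie in its support. -/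
lemma edge_mem_aux {a b : V} (p : G.Walk a b) {g : Sym2 V} (hg : g ∈ p.edges) :
    ∃ x y : V, g = s(x, y) ∧ x ≠ y ∧ x ∈ p.support ∧ y ∈ p.support := by
  induction g using Sym2.ind with
  | _ x y =>
    exact ⟨x, y, rfl, (p.adj_of_mem_edges hg).ne, p.fst_mem_support_of_mem_edges hg,
      p.snd_mem_support_of_mem_edges hg⟩

/-- If the supports of two walks meet in at most one vertex, they are edge-disjoint. -/
lemma edges_disjoint_of_support {a b c d x : V} (p : G.Walk a b) (q : G.Walk c d)
    (h : ∀ y, y ∈ p.support → y ∈ q.support → y = x) :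
    ∀ g ∈ p.edges, g ∉ q.edges := by
  intro g hgp hgq
  obtain ⟨y, z, rfl, hyz, hyp, hzp⟩ := edge_mem_aux p hgp
  have hyq := q.fst_mem_support_of_mem_edges hgq
  have hzq := q.snd_mem_support_of_mem_edges hgq
  exact hyz ((h y hyp hyq).trans (h z hzp hzq).symm)

/-- Split a walk at the first vertex lying in a set `S`. -/
lemma exists_first_hit {a b : V} (p : G.Walk a b) (S : Set V)
    (hhit : ∃ z ∈ p.support, z ∈ S) :
    ∃ (x : V) (q : G.Walk a x) (r : G.Walk x b), x ∈ S ∧ p = q.append r ∧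
      (∀ y ∈ q.support, y ∈ S → y = x) := by
  classical
  induction p with
  | @nil u =>
    refine ⟨u, Walk.nil, Walk.nil, ?_, rfl, ?_⟩
    · simpa using hhit
    · intro y hy _; simpa using hy
  | @cons u w b' h p ih =>
    by_cases ha : u ∈ S
    · exact ⟨u, Walk.nil, Walk.cons h p, ha, rfl, by intro y hy _; simpa using hy⟩
    · have hhit' : ∃ z ∈ p.support, z ∈ S := by
        obtain ⟨z, hz, hzS⟩ := hhit
        rcases (by simpa [support_cons] using hz : z = u ∨ z ∈ p.support) with rfl | hz'
        · exact absurd hzS ha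
        · exact ⟨z, hz', hzS⟩
      obtain ⟨x, q, r, hxS, rfl, hq⟩ := ih hhit'
      refine ⟨x, Walk.cons h q, r, hxS, by simp [cons_append], ?_⟩
      intro y hy hyS
      rcases (by simpa [support_cons] using hy : y = u ∨ y ∈ q.support) with rfl | hy'
      · exact absurd hyS ha
      · exact hq y hy' hyS

/-- From a trail containing the edge `s(u,v)`, extract an initial trail ending at `u` or `v`
that avoids `s(u,v)`. -/
lemma extract_to_endpoint {u v : V} :
    ∀ {α β : V} (q : G.Walk α β), q.IsTrail → s(u, v) ∈ q.edges →
      ∃ (w : V) (q' : G.Walk α w), (w = u ∨ w = v) ∧ q'.IsTrail ∧ s(u, v) ∉ q'.edges ∧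
        ∀ g ∈ q'.edges, g ∈ q.edges := by
  intro α β q
  induction q with
  | nil => intro _ he; simp at he
  | @cons α w₀ β h p ih =>
    intro htrail he
    rw [isTrail_cons] at htrail
    by_cases hfirst : s(u, v) = s(α, w₀)
    · have : (u = α ∧ v = w₀) ∨ (u = w₀ ∧ v = α) := by
        rwa [Sym2.eq_iff] at hfirst
      refine ⟨α, Walk.nil, ?_, ?_, by simp, by simp⟩
      · rcases this with ⟨rfl, _⟩ | ⟨_, rfl⟩
        · exact Or.inl rfl
        · exact Or.inr rfl
      · simp [isTrail_def]
    · have he' : s(u, v) ∈ p.edges := by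
        rcases (by simpa [edges_cons] using he : s(u,v) = s(α, w₀) ∨ s(u,v) ∈ p.edges) with
          hh | hh
        · exact absurd hh hfirst
        · exact hh
      obtain ⟨w, q', hw, ht', hnotin, hsub⟩ := ih htrail.1 he'
      refine ⟨w, Walk.cons h q', hw, ?_, ?_, ?_⟩
      · rw [isTrail_cons]
        exact ⟨ht', fun hc => htrail.2 (hsub _ hc)⟩
      · intro hc
        rcases (by simpa [edges_cons] using hc : s(u,v) = s(α, w₀) ∨ s(u,v) ∈ q'.edges) with
          hh | hh
        · exact hfirst hh
        · exact hnotin hh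
      · intro g hg
        rcases (by simpa [edges_cons] using hg : g = s(α, w₀) ∨ g ∈ q'.edges) with rfl | hh
        · simp [edges_cons]
        · simp [edges_cons, hsub _ hh]

lemma nodup3 {α : Type*} {l1 l2 l3 : List α} (h1 : l1.Nodup) (h2 : l2.Nodup) (h3 : l3.Nodup)
    (d12 : ∀ g ∈ l1, g ∉ l2) (d13 : ∀ g ∈ l1, g ∉ l3) (d23 : ∀ g ∈ l2, g ∉ l3) :
    (l1 ++ (l2 ++ l3)).Nodup := by
  rw [List.nodup_append, List.nodup_append]
  exact ⟨h1, ⟨h2, h3, fun g hg b hb hgb => d23 g hg (by rw [hgb]; exact hb)⟩, by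
    intro g hg
    simp only [List.mem_append]
    intro b hb hgb; rw [← hgb] at hb; rcases hb with h | h
    · exact d12 g hg h
    · exact d13 g hg h⟩

lemma nodup_mid {α : Type*} {l1 l2 l3 : List α} {x : α} (h1 : l1.Nodup) (h2 : l2.Nodup)
    (h3 : l3.Nodup) (d12 : ∀ g ∈ l1, g ∉ l2) (d13 : ∀ g ∈ l1, g ∉ l3)
    (d23 : ∀ g ∈ l2, g ∉ l3) (x1 : x ∉ l1) (x2 : x ∉ l2) (x3 : x ∉ l3) :
    (l1 ++ (x :: (l2 ++ l3))).Nodup := by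
  rw [List.nodup_append, List.nodup_cons, List.nodup_append, List.mem_append]
  refine ⟨h1, ⟨by tauto, h2, h3, fun g hg b hb hgb => d23 g hg (by rw [hgb]; exact hb)⟩, ?_⟩
  intro g hg
  simp only [List.mem_cons, List.mem_append]
  intro b hb hgb; rw [← hgb] at hb; rcases hb with rfl | h | h
  · exact x1 hg
  · exact d12 g hg h
  · exact d13 g hg h


lemma nodup_mid2 {α : Type*} {l1 l2 l3 : List α} {x : α} (h1 : l1.Nodup) (h2 : l2.Nodup)
    (h3 : l3.Nodup) (d12 : ∀ g ∈ l1, g ∉ l2) (d13 : ∀ g ∈ l1, g ∉ l3)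
    (d23 : ∀ g ∈ l2, g ∉ l3) (x1 : x ∉ l1) (x2 : x ∉ l2) (x3 : x ∉ l3) :
    (l1 ++ (l2 ++ (x :: l3))).Nodup := by
  rw [List.nodup_append, List.nodup_append, List.nodup_cons]
  refine ⟨h1, ⟨h2, ⟨x3, h3⟩, ?_⟩, ?_⟩
  · intro g hg
    simp only [List.mem_cons]
    intro b hb hgb; rw [← hgb] at hb; rcases hb with rfl | h
    · exact x2 hg
    · exact d23 g hg h
  · intro g hg
    simp only [List.mem_append, List.mem_cons]
    intro b hb hgb; rw [← hgb] at hb; rcases hb with h | rfl | h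
    · exact d12 g hg h
    · exact x1 hg
    · exact d13 g hg h

/-- In a 2-edge-connected graph, through any two vertices there is a closed trail. -/
lemma closed_trail_through (hconn : G.Connected)
    (h2 : ∀ f ∈ G.edgeSet, (G.deleteEdges {f}).Connected) (x y : V) :
    ∃ W : G.Walk x x, W.IsTrail ∧ y ∈ W.support := by
  classical
  suffices H : ∀ (n : ℕ) (x y : V) (p : G.Walk x y), p.length ≤ n →
      ∃ W : G.Walk x x, W.IsTrail ∧ y ∈ W.support by
    obtain ⟨p⟩ := hconn.preconnected x y
    exact H p.length x y p le_rfl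
  intro n
  induction n with
  | zero =>
    intro x y p hp
    have hxy : x = y := eq_of_length_eq_zero (Nat.le_zero.mp hp)
    subst hxy
    exact ⟨Walk.nil, by simp [isTrail_def], by simp⟩
  | succ n ih =>
    intro x y p hp
    by_cases hxy : x = y
    · subst hxy; exact ⟨Walk.nil, by simp [isTrail_def], by simp⟩
    · obtain ⟨m, hym, q, hq⟩ := exists_eq_cons_of_ne (Ne.symm hxy) p.bypass.reverse
      have hqlen : q.length ≤ n := by
        have h1 : p.bypass.reverse.length = q.length + 1 := by rw [hq]; simp [length_cons]
        have h2 : p.bypass.reverse.length ≤ n + 1 := by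
          rw [length_reverse]; exact le_trans p.length_bypass_le hp
        omega
      obtain ⟨W, hWt, hmW⟩ := ih x m q.reverse (by rwa [length_reverse])
      by_cases hyW : y ∈ W.support
      · exact ⟨W, hWt, hyW⟩
      · -- attach `y` to `W` using the edge `m-y` and a path in `G - my`
        have hf : s(m, y) ∈ G.edgeSet := (SimpleGraph.mem_edgeSet G).mpr hym.symm
        obtain ⟨r0⟩ := (h2 _ hf).preconnected y x
        set R₀ := r0.bypass with hR₀
        have hR₀p := r0.bypass_isPath
        have hRedges : ∀ g ∈ R₀.edges, g ∈ G.edgeSet := by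
          intro g hg
          have := R₀.edges_subset_edgeSet hg
          rw [edgeSet_deleteEdges] at this
          exact this.1
        set R : G.Walk y x := R₀.transfer G hRedges with hR
        have hRp : R.IsPath := hR₀p.transfer _
        have hfR : s(m, y) ∉ R.edges := by
          intro hc
          rw [hR, edges_transfer] at hc
          have := R₀.edges_subset_edgeSet hc
          rw [edgeSet_deleteEdges] at this
          exact this.2 rfl
        obtain ⟨t, R1, R2, htW, hRsplit, hR1⟩ :=
          exists_first_hit R {z | z ∈ W.support} ⟨x, R.end_mem_support, W.start_mem_support⟩
        have htW' : t ∈ W.support := htW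
        -- basic edge facts
        have hRe : R.edges = R1.edges ++ R2.edges := by rw [hRsplit, edges_append]
        have hR1nd : R1.edges.Nodup := by
          have := hRp.isTrail.edges_nodup
          rw [hRe] at this
          exact this.of_append_left
        have hfR1 : s(m, y) ∉ R1.edges := fun hc => hfR (by rw [hRe]; exact List.mem_append_left _ hc)
        have hR1W : ∀ g ∈ R1.edges, g ∉ W.edges :=
          edges_disjoint_of_support R1 W (fun z hz hzW => hR1 z hz hzW)
        have hmyW : s(m, y) ∉ W.edges := fun hc => hyW (W.snd_mem_support_of_mem_edges hc)
        set Wa := W.takeUntil t htW' with hWa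
        set Wb := W.dropUntil t htW' with hWb
        have hWe : Wa.edges ++ Wb.edges = W.edges := by rw [← edges_append, take_spec]
        have hWnd : (Wa.edges ++ Wb.edges).Nodup := by rw [hWe]; exact hWt.edges_nodup
        have hmWab : m ∈ Wa.support ∨ m ∈ Wb.support := by
          rw [← mem_support_append_iff, take_spec]; exact hmW
        have hWand : Wa.edges.Nodup := hWnd.of_append_left
        have hWbnd : Wb.edges.Nodup := hWnd.of_append_right
        have hWaWb : ∀ g ∈ Wa.edges, g ∉ Wb.edges :=
          fun g hg => (List.disjoint_of_nodup_append hWnd) hg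
        have hWaW : ∀ g ∈ Wa.edges, g ∈ W.edges :=
          fun g hg => by rw [← hWe]; exact List.mem_append_left _ hg
        have hWbW : ∀ g ∈ Wb.edges, g ∈ W.edges :=
          fun g hg => by rw [← hWe]; exact List.mem_append_right _ hg
        rcases hmWab with hm | hm
        · -- route : x →Wa-take→ m →(m,y)→ y →R1→ t →Wb→ x
          refine ⟨(Wa.takeUntil m hm).append (Walk.cons hym.symm (R1.append Wb)), ?_, ?_⟩
          · rw [isTrail_def, edges_append, edges_cons, edges_append]
            have hE1a : (Wa.takeUntil m hm).edges ++ (Wa.dropUntil m hm).edges = Wa.edges := by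
              rw [← edges_append, take_spec]
            have hE1nd : (Wa.takeUntil m hm).edges.Nodup := by
              have := hWand; rw [← hE1a] at this; exact this.of_append_left
            have hE1W : ∀ g ∈ (Wa.takeUntil m hm).edges, g ∈ W.edges :=
              fun g hg => hWaW g (Wa.edges_takeUntil_subset hm hg)
            refine nodup_mid hE1nd hR1nd hWbnd ?_ ?_ ?_ ?_ hfR1 ?_
            · exact fun g hg hc => hR1W g hc (hE1W g hg)
            · exact fun g hg => hWaWb g (Wa.edges_takeUntil_subset hm hg)
            · exact fun g hg hc => hR1W g hg (hWbW g hc)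
            · exact fun hc => hmyW (hE1W _ hc)
            · exact fun hc => hmyW (hWbW _ hc)
          · have hy1 : y ∈ (R1.append Wb).support := by
              rw [mem_support_append_iff]; exact Or.inl R1.start_mem_support
            rw [mem_support_append_iff]
            exact Or.inr (by rw [support_cons]; exact List.mem_cons_of_mem _ hy1)
        · -- route : x →Wa→ t →R1.rev→ y →(y,m)→ m →Wb-drop→ x
          refine ⟨Wa.append (R1.reverse.append (Walk.cons hym (Wb.dropUntil m hm))), ?_, ?_⟩
          · rw [isTrail_def, edges_append, edges_append, edges_cons, edges_reverse]
            have hE3a : (Wb.takeUntil m hm).edges ++ (Wb.dropUntil m hm).edges = Wb.edges := by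
              rw [← edges_append, take_spec]
            have hE3nd : (Wb.dropUntil m hm).edges.Nodup := by
              have := hWbnd; rw [← hE3a] at this; exact this.of_append_right
            have hE3W : ∀ g ∈ (Wb.dropUntil m hm).edges, g ∈ W.edges :=
              fun g hg => hWbW g (Wb.edges_dropUntil_subset hm hg)
            have hsym : s(y, m) = s(m, y) := Sym2.eq_swap
            rw [hsym]
            refine nodup_mid2 hWand (by rwa [List.nodup_reverse]) hE3nd ?_ ?_ ?_ ?_
              (by rwa [List.mem_reverse]) ?_
            · exact fun g hg hc => hR1W g (List.mem_reverse.mp hc) (hWaW g hg)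
            · exact fun g hg hc => hWaWb g hg (Wb.edges_dropUntil_subset hm hc)
            · exact fun g hg hc => hR1W g (List.mem_reverse.mp hg) (hE3W g hc)
            · exact fun hc => hmyW (hWaW _ hc)
            · exact fun hc => hmyW (hE3W _ hc)
          · rw [mem_support_append_iff, mem_support_append_iff]
            exact Or.inr (Or.inr (Walk.cons hym (Wb.dropUntil m hm)).start_mem_support)

/-- Splice a connector `P1` with two edge-disjoint trails `B1 B2 : c → u` into a
trail from `v` to `u` through `c`. -/
lemma trail_via {u v c t : V} (P1 : G.Walk v t) (B1 B2 : G.Walk c u)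
    (ht : t ∈ B1.support) (hP1 : P1.edges.Nodup) (hB1 : B1.edges.Nodup)
    (hB2 : B2.edges.Nodup) (hd : ∀ g ∈ B1.edges, g ∉ B2.edges)
    (hP1B1 : ∀ z ∈ P1.support, z ∈ B1.support → z = t)
    (hP1B2 : ∀ z ∈ P1.support, z ∈ B2.support → z = t)
    (he1 : s(u, v) ∉ P1.edges) (he2 : s(u, v) ∉ B1.edges) (he3 : s(u, v) ∉ B2.edges) :
    ∃ T : G.Walk v u, T.IsTrail ∧ s(u, v) ∉ T.edges ∧ c ∈ T.support := by
  classical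
  have htake : ∀ g ∈ (B1.takeUntil t ht).edges, g ∈ B1.edges :=
    fun g hg => B1.edges_takeUntil_subset ht hg
  have htnd : (B1.takeUntil t ht).edges.Nodup := by
    have : (B1.takeUntil t ht).edges ++ (B1.dropUntil t ht).edges = B1.edges := by
      rw [← edges_append, take_spec]
    rw [← this] at hB1; exact hB1.of_append_left
  have hP1dB1 : ∀ g ∈ P1.edges, g ∉ B1.edges := edges_disjoint_of_support P1 B1 hP1B1
  have hP1dB2 : ∀ g ∈ P1.edges, g ∉ B2.edges := edges_disjoint_of_support P1 B2 hP1B2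
  refine ⟨P1.append ((B1.takeUntil t ht).reverse.append B2), ?_, ?_, ?_⟩
  · rw [isTrail_def, edges_append, edges_append, edges_reverse]
    refine nodup3 hP1 (by rwa [List.nodup_reverse]) hB2 ?_ ?_ ?_
    · exact fun g hg hc => hP1dB1 g hg (htake g (List.mem_reverse.mp hc))
    · exact hP1dB2
    · exact fun g hg hc => hd g (htake g (List.mem_reverse.mp hg)) hc
  · rw [edges_append, edges_append, edges_reverse]
    simp only [List.mem_append, List.mem_reverse]
    rintro (h | h | h)
    · exact he1 h
    · exact he2 (htake _ h)
    · exact he3 h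
  · rw [mem_support_append_iff, mem_support_append_iff]
    exact Or.inr (Or.inr B2.start_mem_support)

/-- Given two edge-disjoint trails from `c` to `u` avoiding `s(u,v)`, there is a trail
from `v` to `u` avoiding `s(u,v)` and passing through `c`. -/
lemma two_trails_to_T (h2 : ∀ f ∈ G.edgeSet, (G.deleteEdges {f}).Connected)
    {u v c : V} (hadj : G.Adj u v) (B1 B2 : G.Walk c u)
    (hB1 : B1.edges.Nodup) (hB2 : B2.edges.Nodup)
    (hd : ∀ g ∈ B1.edges, g ∉ B2.edges)
    (he2 : s(u, v) ∉ B1.edges) (he3 : s(u, v) ∉ B2.edges) :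
    ∃ T : G.Walk v u, T.IsTrail ∧ s(u, v) ∉ T.edges ∧ c ∈ T.support := by
  classical
  have hf : s(u, v) ∈ G.edgeSet := (SimpleGraph.mem_edgeSet G).mpr hadj
  obtain ⟨r0⟩ := (h2 _ hf).preconnected v c
  have hRedges : ∀ g ∈ r0.bypass.edges, g ∈ G.edgeSet := by
    intro g hg
    have := r0.bypass.edges_subset_edgeSet hg
    rw [edgeSet_deleteEdges] at this
    exact this.1
  set R : G.Walk v c := r0.bypass.transfer G hRedges with hR
  have hRnd : R.edges.Nodup := (r0.bypass_isPath.transfer _).isTrail.edges_nodup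
  have hfR : s(u, v) ∉ R.edges := by
    intro hc
    rw [hR, edges_transfer] at hc
    have := r0.bypass.edges_subset_edgeSet hc
    rw [edgeSet_deleteEdges] at this
    exact this.2 rfl
  obtain ⟨t, P1, P2, htS, hRsplit, hprop⟩ :=
    exists_first_hit R {z | z ∈ B1.support ∨ z ∈ B2.support}
      ⟨c, R.end_mem_support, Or.inl B1.start_mem_support⟩
  have hRe : R.edges = P1.edges ++ P2.edges := by rw [hRsplit, edges_append]
  have hP1nd : P1.edges.Nodup := by rw [hRe] at hRnd; exact hRnd.of_append_left
  have hfP1 : s(u, v) ∉ P1.edges := fun hc => hfR (by rw [hRe]; exact List.mem_append_left _ hc)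
  rcases htS with ht | ht
  · exact trail_via P1 B1 B2 ht hP1nd hB1 hB2 hd
      (fun z hz hz1 => hprop z hz (Or.inl hz1)) (fun z hz hz2 => hprop z hz (Or.inr hz2))
      hfP1 he2 he3
  · exact trail_via P1 B2 B1 ht hP1nd hB2 hB1 (fun g hg hc => hd g hc hg)
      (fun z hz hz2 => hprop z hz (Or.inr hz2)) (fun z hz hz1 => hprop z hz (Or.inl hz1))
      hfP1 he3 he2

/-- In a 2-edge-connected graph, for every edge `uv` and vertex `c` there is a trail from
`v` to `u` avoiding the edge `uv` and passing through `c`. -/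
lemma exists_trail_through (hconn : G.Connected)
    (h2 : ∀ f ∈ G.edgeSet, (G.deleteEdges {f}).Connected)
    {u v : V} (hadj : G.Adj u v) (c : V) :
    ∃ T : G.Walk v u, T.IsTrail ∧ s(u, v) ∉ T.edges ∧ c ∈ T.support := by
  classical
  obtain ⟨W, hWt, hcW⟩ := closed_trail_through hconn h2 u c
  set A1 := W.takeUntil c hcW with hA1
  set A2 := W.dropUntil c hcW with hA2
  have hWe : A1.edges ++ A2.edges = W.edges := by rw [← edges_append, take_spec]
  have hWnd : (A1.edges ++ A2.edges).Nodup := by rw [hWe]; exact hWt.edges_nodup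
  have hA1nd : A1.edges.Nodup := hWnd.of_append_left
  have hA2nd : A2.edges.Nodup := hWnd.of_append_right
  have hdisj : ∀ g ∈ A1.edges, g ∉ A2.edges :=
    fun g hg => (List.disjoint_of_nodup_append hWnd) hg
  by_cases heW : s(u, v) ∈ W.edges
  · rw [← hWe, List.mem_append] at heW
    rcases heW with he1 | he2
    · -- `uv` in A1 : u → c ; work with A1.reverse : c → u
      have he2' : s(u, v) ∉ A2.edges := hdisj _ he1
      have heA1r : s(u, v) ∈ A1.reverse.edges := by rwa [edges_reverse, List.mem_reverse]
      obtain ⟨w, q', hw, hq't, hq'no, hq'sub⟩ :=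
        extract_to_endpoint A1.reverse (by rwa [isTrail_def, edges_reverse, List.nodup_reverse])
          heA1r
      have hq'subA1 : ∀ g ∈ q'.edges, g ∈ A1.edges := by
        intro g hg
        have := hq'sub g hg
        rwa [edges_reverse, List.mem_reverse] at this
      rcases hw with rfl | rfl
      · -- w = u : q' : c → u avoiding uv; pair with A2
        exact two_trails_to_T h2 hadj q' A2 hq't.edges_nodup hA2nd
          (fun g hg hc => hdisj g (hq'subA1 g hg) hc) hq'no he2'
      · -- w = v : direct trail  v →q'.rev→ c →A2→ u
        refine ⟨q'.reverse.append A2, ?_, ?_, ?_⟩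
        · rw [isTrail_def, edges_append, edges_reverse]
          rw [List.nodup_append]
          refine ⟨by rw [List.nodup_reverse]; exact hq't.edges_nodup, hA2nd, ?_⟩
          intro g hg
          rw [List.mem_reverse] at hg
          exact fun b hb hgb => hdisj g (hq'subA1 g hg) (by rw [hgb]; exact hb)
        · rw [edges_append, edges_reverse]
          simp only [List.mem_append, List.mem_reverse]
          rintro (h | h)
          · exact hq'no h
          · exact he2' h
        · rw [mem_support_append_iff]
          exact Or.inr A2.start_mem_support
    · -- `uv` in A2 : c → u
      have he1' : s(u, v) ∉ A1.edges := fun hc => hdisj _ hc he2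
      obtain ⟨w, q', hw, hq't, hq'no, hq'sub⟩ :=
        extract_to_endpoint A2 (by rwa [isTrail_def]) he2
      rcases hw with rfl | rfl
      · -- w = u : pair A1.reverse with q'
        refine two_trails_to_T h2 hadj A1.reverse q'
          (by rwa [edges_reverse, List.nodup_reverse]) hq't.edges_nodup ?_ ?_ hq'no
        · intro g hg hc
          rw [edges_reverse, List.mem_reverse] at hg
          exact hdisj g hg (hq'sub g hc)
        · rwa [edges_reverse, List.mem_reverse]
      · -- w = v : direct trail v →q'.rev→ c →A1.rev→ u
        refine ⟨q'.reverse.append A1.reverse, ?_, ?_, ?_⟩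
        · rw [isTrail_def, edges_append, edges_reverse, edges_reverse]
          rw [List.nodup_append]
          refine ⟨by rw [List.nodup_reverse]; exact hq't.edges_nodup, by rwa [List.nodup_reverse], ?_⟩
          intro g hg
          rw [List.mem_reverse] at hg
          intro b hb hgb; rw [List.mem_reverse] at hb
          exact hdisj b hb (by rw [← hgb]; exact hq'sub g hg)
        · rw [edges_append, edges_reverse, edges_reverse]
          simp only [List.mem_append, List.mem_reverse]
          rintro (h | h)
          · exact hq'no h
          · exact he1' h
        · rw [mem_support_append_iff]
          exact Or.inr A1.reverse.start_mem_support
  · -- uv not in W at all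
    have h1 : s(u, v) ∉ A1.edges := fun hc => heW (by rw [← hWe]; exact List.mem_append_left _ hc)
    have h2' : s(u, v) ∉ A2.edges := fun hc => heW (by rw [← hWe]; exact List.mem_append_right _ hc)
    refine two_trails_to_T h2 hadj A1.reverse A2
      (by rwa [edges_reverse, List.nodup_reverse]) hA2nd ?_ ?_ h2'
    · intro g hg
      rw [edges_reverse, List.mem_reverse] at hg
      exact hdisj g hg
    · rwa [edges_reverse, List.mem_reverse]

end SimpleGraph.Walk

/-- In a 2-edge-connected graph, every edge not lying on a given odd cycle is
contained in an even circuit (closed trail). -/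
theorem stmt_8 {V : Type*} [Fintype V] (G : SimpleGraph V) (hG : TwoEdgeConnected G)
    {a : V} (C : G.Walk a a) (hC : C.IsCycle) (hCodd : Odd C.length)
    (e : Sym2 V) (he : e ∈ G.edgeSet) (heC : e ∉ C.edges) :
    ∃ (b : V) (D : G.Walk b b), D.IsCircuit ∧ Even D.length ∧ e ∈ D.edges := by
  classical
  obtain ⟨hconn, h2⟩ := hG
  induction e using Sym2.ind with
  | _ u v =>
  have hadj : G.Adj u v := (SimpleGraph.mem_edgeSet G).mp he
  obtain ⟨T, hTt, hTe, haT⟩ := SimpleGraph.Walk.exists_trail_through hconn h2 hadj a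
  -- split T at the first and last vertices lying on C
  obtain ⟨x, A, rest, hxC, hTsplit, hAprop⟩ :=
    T.exists_first_hit {z | z ∈ C.support} ⟨a, haT, C.start_mem_support⟩
  obtain ⟨y, B', M', hyC, hrsplit, hBprop⟩ :=
    rest.reverse.exists_first_hit {z | z ∈ C.support}
      ⟨x, by rw [Walk.support_reverse]; exact List.mem_reverse.mpr rest.start_mem_support, hxC⟩
  have hxC' : x ∈ C.support := hxC
  have hyC' : y ∈ C.support := hyC
  set B : G.Walk y u := B'.reverse with hB
  -- edge bookkeeping for A and B
  have hTe2 : T.edges = A.edges ++ rest.edges := by rw [hTsplit, Walk.edges_append]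
  have hTnd : (A.edges ++ rest.edges).Nodup := by rw [← hTe2]; exact hTt.edges_nodup
  have hAnd : A.edges.Nodup := hTnd.of_append_left
  have hrestnd : rest.edges.Nodup := hTnd.of_append_right
  have hAdrest : ∀ g ∈ A.edges, g ∉ rest.edges :=
    fun g hg => (List.disjoint_of_nodup_append hTnd) hg
  have hrre : rest.reverse.edges = B'.edges ++ M'.edges := by rw [hrsplit, Walk.edges_append]
  have hBsubrest : ∀ g ∈ B.edges, g ∈ rest.edges := by
    intro g hg
    rw [hB, Walk.edges_reverse, List.mem_reverse] at hg
    have : g ∈ rest.reverse.edges := by rw [hrre]; exact List.mem_append_left _ hg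
    rwa [Walk.edges_reverse, List.mem_reverse] at this
  have hBnd : B.edges.Nodup := by
    have h1 : rest.reverse.edges.Nodup := by rwa [Walk.edges_reverse, List.nodup_reverse]
    rw [hrre] at h1
    rw [hB, Walk.edges_reverse, List.nodup_reverse]
    exact h1.of_append_left
  have hAB : ∀ g ∈ A.edges, g ∉ B.edges := fun g hg hc => hAdrest g hg (hBsubrest g hc)
  have heA : s(u, v) ∉ A.edges := fun hc => hTe (by rw [hTe2]; exact List.mem_append_left _ hc)
  have heB : s(u, v) ∉ B.edges :=
    fun hc => hTe (by rw [hTe2]; exact List.mem_append_right _ (hBsubrest _ hc))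
  have hByprop : ∀ z ∈ B.support, z ∈ C.support → z = y := by
    intro z hz
    rw [hB, Walk.support_reverse, List.mem_reverse] at hz
    exact hBprop z hz
  -- rotate C to x and split it at y to get the two arcs
  have hC12 : (C.takeUntil x hxC').append (C.dropUntil x hxC') = C := C.take_spec hxC'
  set C1 := C.takeUntil x hxC' with hC1def
  set C2 := C.dropUntil x hxC' with hC2def
  have hCe : C1.edges ++ C2.edges = C.edges := by rw [← Walk.edges_append, hC12]
  have hCnd : (C1.edges ++ C2.edges).Nodup := by
    rw [hCe]; exact hC.isCircuit.isTrail.edges_nodup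
  have hClen : C1.length + C2.length = C.length := by
    have := congrArg Walk.length hC12
    rwa [Walk.length_append] at this
  have hyrot : y ∈ (C2.append C1).support := by
    have h1 : y ∈ (C1.append C2).support := by rw [hC12]; exact hyC'
    rw [Walk.mem_support_append_iff] at h1
    rw [Walk.mem_support_append_iff]
    tauto
  set Crot : G.Walk x x := C2.append C1 with hCrot
  have hCrotnd : Crot.edges.Nodup := by
    rw [hCrot, Walk.edges_append]
    exact (List.perm_append_comm).nodup hCnd
  have hCrotsub : ∀ g ∈ Crot.edges, g ∈ C.edges := by
    intro g hg
    rw [hCrot, Walk.edges_append, List.mem_append] at hg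
    rw [← hCe, List.mem_append]
    tauto
  have hCrotlen : Crot.length = C.length := by
    rw [hCrot, Walk.length_append]; omega
  have harcspec : (Crot.takeUntil y hyrot).edges ++ (Crot.dropUntil y hyrot).edges
      = Crot.edges := by rw [← Walk.edges_append, Crot.take_spec hyrot]
  have harclen : (Crot.takeUntil y hyrot).length + (Crot.dropUntil y hyrot).length
      = Crot.length := by
    have := congrArg Walk.length (Crot.take_spec hyrot)
    rwa [Walk.length_append] at this
  -- choose the arc of the right parity
  obtain ⟨arc, harcnd, harcsub, hpar⟩ : ∃ arc : G.Walk x y, arc.edges.Nodup ∧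
      (∀ g ∈ arc.edges, g ∈ C.edges) ∧ Even (1 + A.length + arc.length + B.length) := by
    have hnd1 : (Crot.takeUntil y hyrot).edges.Nodup := by
      rw [← harcspec] at hCrotnd; exact hCrotnd.of_append_left
    have hnd2 : (Crot.dropUntil y hyrot).edges.Nodup := by
      rw [← harcspec] at hCrotnd; exact hCrotnd.of_append_right
    have hsub1 : ∀ g ∈ (Crot.takeUntil y hyrot).edges, g ∈ C.edges :=
      fun g hg => hCrotsub g (Crot.edges_takeUntil_subset hyrot hg)
    have hsub2 : ∀ g ∈ (Crot.dropUntil y hyrot).edges, g ∈ C.edges :=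
      fun g hg => hCrotsub g (Crot.edges_dropUntil_subset hyrot hg)
    by_cases hp : Even (1 + A.length + (Crot.takeUntil y hyrot).length + B.length)
    · exact ⟨Crot.takeUntil y hyrot, hnd1, hsub1, hp⟩
    · refine ⟨(Crot.dropUntil y hyrot).reverse, by rwa [Walk.edges_reverse, List.nodup_reverse],
        ?_, ?_⟩
      · intro g hg
        rw [Walk.edges_reverse, List.mem_reverse] at hg
        exact hsub2 g hg
      · rw [Walk.length_reverse]
        have ho : C.length % 2 = 1 := Nat.odd_iff.mp hCodd
        have hp' : (1 + A.length + (Crot.takeUntil y hyrot).length + B.length) % 2 = 1 :=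
          Nat.odd_iff.mp (Nat.not_even_iff_odd.mp hp)
        rw [Nat.even_iff]
        omega
  -- assemble the even circuit
  refine ⟨u, Walk.cons hadj (A.append (arc.append B)), ⟨⟨?_⟩, by simp⟩, ?_, ?_⟩
  · rw [Walk.edges_cons, Walk.edges_append, Walk.edges_append]
    have hAC : ∀ g ∈ A.edges, g ∉ C.edges := A.edges_disjoint_of_support C hAprop
    have hBC : ∀ g ∈ B.edges, g ∉ C.edges := B.edges_disjoint_of_support C hByprop
    rw [List.nodup_cons]
    constructor
    · simp only [List.mem_append]
      rintro (h | h | h)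
      · exact heA h
      · exact heC (harcsub _ h)
      · exact heB h
    · exact SimpleGraph.Walk.nodup3 hAnd harcnd hBnd
        (fun g hg hc => hAC g hg (harcsub g hc)) hAB
        (fun g hg hc => hBC g hc (harcsub g hg))
  · rw [Walk.length_cons, Walk.length_append, Walk.length_append]
    have hp2 := hpar
    rw [Nat.even_iff] at hp2 ⊢
    omega
  · rw [Walk.edges_cons]
    exact List.mem_cons_self
end
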